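/- arXiv:2501.04626 — 5 statements merged into one kernel-verified Lean document; each statement's English description precedes it below -/
import Mathlib

section
/- Let H, X, Y be vector fields satisfying the sl(2,ℂ) bracket relations [H,X] = X, [H,Y] = −Y, [Y,X] = 2H. If z(t), ζ(t), ξ(t) is a solution of the geodesic system ż = ζZ(z), ζ̇ = ζξ, ξ̇ = ξ²/2 − ρ(z)ζ², then for any matrix (a b; c d) in SL(2,ℂ), the triple ( z((at+b)/(ct+d)), (ct+d)^{−2} ζ((at+b)/(ct+d)), (ct+d)^{−2} ξ((at+b)/(ct+d)) − 2c/(ct+d) ) is again a solution of the same system. -/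
/-- SL(2,ℂ)-equivariance of the solutions of the projective geodesic
system `ż = ζZ(z)`, `ζ̇ = ζξ`, `ξ̇ = ξ²/2 − ρ(z)ζ²`: if `(z, ζ, ξ)` is a solution
(on a set `T` of times) and `ad − bc = 1`, then
`( z∘m, (ct+d)⁻² ζ∘m, (ct+d)⁻² ξ∘m − 2c/(ct+d) )`, where `m t = (at+b)/(ct+d)`,
is again a solution (at times `t` with `ct + d ≠ 0` and `m t ∈ T`). -/
theorem stmt_6 {E : Type*} [NormedAddCommGroup E] [NormedSpace ℂ E]
    (Z : E → E) (ρ : E → ℂ) (T : Set ℂ)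
    (z : ℂ → E) (ζ ξ : ℂ → ℂ)
    (hz : ∀ t ∈ T, HasDerivAt z (ζ t • Z (z t)) t)
    (hζ : ∀ t ∈ T, HasDerivAt ζ (ζ t * ξ t) t)
    (hξ : ∀ t ∈ T, HasDerivAt ξ ((ξ t) ^ 2 / 2 - ρ (z t) * (ζ t) ^ 2) t)
    (a b c d : ℂ) (hsl2 : a * d - b * c = 1) :
    ∀ t : ℂ, c * t + d ≠ 0 → (a * t + b) / (c * t + d) ∈ T →
      HasDerivAt (fun s => z ((a * s + b) / (c * s + d)))
        ((((c * t + d) ^ 2)⁻¹ * ζ ((a * t + b) / (c * t + d))) •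
          Z (z ((a * t + b) / (c * t + d)))) t ∧
      HasDerivAt (fun s => ((c * s + d) ^ 2)⁻¹ * ζ ((a * s + b) / (c * s + d)))
        ((((c * t + d) ^ 2)⁻¹ * ζ ((a * t + b) / (c * t + d))) *
          (((c * t + d) ^ 2)⁻¹ * ξ ((a * t + b) / (c * t + d)) - 2 * c / (c * t + d))) t ∧
      HasDerivAt (fun s => ((c * s + d) ^ 2)⁻¹ * ξ ((a * s + b) / (c * s + d))
            - 2 * c / (c * s + d))
        ((((c * t + d) ^ 2)⁻¹ * ξ ((a * t + b) / (c * t + d)) - 2 * c / (c * t + d)) ^ 2 / 2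
          - ρ (z ((a * t + b) / (c * t + d))) *
            (((c * t + d) ^ 2)⁻¹ * ζ ((a * t + b) / (c * t + d))) ^ 2) t := by
  intro t hct hmt
  set w : ℂ := (a * t + b) / (c * t + d) with hw
  have hnum : HasDerivAt (fun s : ℂ => a * s + b) a t := by
    simpa using ((hasDerivAt_id t).const_mul a).add_const b
  have hden : HasDerivAt (fun s : ℂ => c * s + d) c t := by
    simpa using ((hasDerivAt_id t).const_mul c).add_const d
  have hm' : HasDerivAt (fun s => (a * s + b) / (c * s + d)) (((c * t + d) ^ 2)⁻¹) t := by
    have h1 : a * (c * t + d) - (a * t + b) * c = 1 := by linear_combination hsl2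
    have := hnum.div hden hct
    rw [h1, one_div] at this
    exact this
  -- derivative of (c s + d)^(-2)
  have hsq : HasDerivAt (fun s : ℂ => ((c * s + d) ^ 2)⁻¹)
      (-(2 * (c * t + d) * c) / ((c * t + d) ^ 2) ^ 2) t := by
    have h2 : HasDerivAt (fun s : ℂ => (c * s + d) ^ 2) (2 * (c * t + d) * c) t := by
      simpa [Pi.pow_def] using hden.pow 2
    simpa [Pi.inv_def] using h2.inv (pow_ne_zero 2 hct)
  -- composed derivatives
  have hzc : HasDerivAt (fun s => z ((a * s + b) / (c * s + d)))
      ((((c * t + d) ^ 2)⁻¹ * ζ w) • Z (z w)) t := by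
    have := (hz w hmt).scomp t hm'
    simpa [smul_smul, Function.comp_def] using this
  have hζc : HasDerivAt (fun s => ζ ((a * s + b) / (c * s + d)))
      ((ζ w * ξ w) * ((c * t + d) ^ 2)⁻¹) t := (hζ w hmt).comp t hm'
  have hξc : HasDerivAt (fun s => ξ ((a * s + b) / (c * s + d)))
      (((ξ w) ^ 2 / 2 - ρ (z w) * (ζ w) ^ 2) * ((c * t + d) ^ 2)⁻¹) t :=
    (hξ w hmt).comp t hm'
  have hfr : HasDerivAt (fun s : ℂ => 2 * c / (c * s + d))
      ((0 * (c * t + d) - 2 * c * c) / (c * t + d) ^ 2) t :=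
    (hasDerivAt_const t (2 * c)).div hden hct
  clear_value w
  refine ⟨hzc, ?_, ?_⟩
  · have := hsq.fun_mul hζc
    rw [← hw] at this
    refine this.congr_deriv ?_
    symm
    have hu : (c * t + d) ≠ 0 := hct
    generalize c * t + d = u at hu ⊢
    field_simp
    ring
  · have := (hsq.fun_mul hξc).fun_sub hfr
    rw [← hw] at this
    refine this.congr_deriv ?_
    symm
    have hu : (c * t + d) ≠ 0 := hct
    generalize c * t + d = u at hu ⊢
    field_simp
    ring
end

section
/- Let H and X be vector fields on a complex manifold with [H,X] = X. Then the flows satisfy Φ_{H+cX}^t = Φ_H^t ∘ Φ_X^{c(e^t−1)} for all c ∈ ℂ and all times t where both sides are defined. -/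
open Set Complex

section helpers
variable {E : Type*} [NormedAddCommGroup E] [NormedSpace ℂ E]

/-- Derivative of `r ↦ f (r * t)` along the real line. -/
lemma hasDerivAt_real_line {f : ℂ → E} {d : E} (t : ℂ) {r : ℝ}
    (h : HasDerivAt f d ((r : ℂ) * t)) :
    HasDerivAt (fun r : ℝ => f ((r : ℂ) * t)) (t • d) r := by
  have h1 : HasDerivAt (fun r : ℝ => (r : ℂ) * t) t r := by
    simpa using (Complex.ofRealCLM.hasDerivAt (x := r)).mul_const t
  have h2 : HasFDerivAt f ((1 : ℂ →L[ℂ] ℂ).smulRight d) ((r:ℂ)*t) := h.hasFDerivAt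
  have h3 := (h2.restrictScalars ℝ).comp_hasDerivAt r h1
  simpa [Function.comp_def] using h3

/-- Uniqueness for autonomous ODEs with complex time. -/
lemma ode_unique_complex {f : E → E} {Kf : NNReal} (hf : LipschitzWith Kf f)
    {a b : ℂ → E} (ha : ∀ τ, HasDerivAt a (f (a τ)) τ)
    (hb : ∀ τ, HasDerivAt b (f (b τ)) τ) (h0 : a 0 = b 0) (t : ℂ) : a t = b t := by
  have hA : ∀ r : ℝ, HasDerivAt (fun r : ℝ => a ((r:ℂ)*t)) (t • f (a ((r:ℂ)*t))) r :=
    fun r => hasDerivAt_real_line t (ha _)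
  have hB : ∀ r : ℝ, HasDerivAt (fun r : ℝ => b ((r:ℂ)*t)) (t • f (b ((r:ℂ)*t))) r :=
    fun r => hasDerivAt_real_line t (hb _)
  have hlip : ∀ _r : ℝ, LipschitzWith (‖t‖₊ * Kf) (fun y => t • f y) :=
    fun _ => (lipschitzWith_smul t).comp hf
  have := ODE_solution_unique (v := fun _ y => t • f y) hlip
    (Continuous.continuousOn (continuous_iff_continuousAt.2
      fun r => (hA r).differentiableAt.continuousAt))
    (fun r _ => (hA r).hasDerivWithinAt)
    (Continuous.continuousOn (continuous_iff_continuousAt.2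
      fun r => (hB r).differentiableAt.continuousAt))
    (fun r _ => (hB r).hasDerivWithinAt)
    (by simpa using h0) (a := 0) (b := 1)
  have h1 := this (right_mem_Icc.2 zero_le_one)
  simpa using h1

/-- Flow Lipschitz bound in the initial condition, complex time. -/
lemma flow_lipschitz {f : E → E} {Kf : NNReal} (hf : LipschitzWith Kf f)
    {P : ℂ → E → E} (hP0 : ∀ x, P 0 x = x)
    (hP : ∀ τ x, HasDerivAt (fun s => P s x) (f (P τ x)) τ)
    (t : ℂ) (u v : E) :
    dist (P t u) (P t v) ≤ dist u v * Real.exp ((Kf * ‖t‖)) := by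
  have hA : ∀ r : ℝ, HasDerivAt (fun r : ℝ => P ((r:ℂ)*t) u) (t • f (P ((r:ℂ)*t) u)) r :=
    fun r => hasDerivAt_real_line t (hP _ u)
  have hB : ∀ r : ℝ, HasDerivAt (fun r : ℝ => P ((r:ℂ)*t) v) (t • f (P ((r:ℂ)*t) v)) r :=
    fun r => hasDerivAt_real_line t (hP _ v)
  have hlip : ∀ _r : ℝ, LipschitzWith (‖t‖₊ * Kf) (fun y => t • f y) :=
    fun _ => (lipschitzWith_smul t).comp hf
  have := dist_le_of_trajectories_ODE (v := fun _ y => t • f y) hlip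
    (Continuous.continuousOn (continuous_iff_continuousAt.2
      fun r => (hA r).differentiableAt.continuousAt))
    (fun r _ => (hA r).hasDerivWithinAt)
    (Continuous.continuousOn (continuous_iff_continuousAt.2
      fun r => (hB r).differentiableAt.continuousAt))
    (fun r _ => (hB r).hasDerivWithinAt)
    (by simp [hP0] : dist _ _ ≤ dist u v) (a := 0) (b := 1)
  have h1 := this 1 (right_mem_Icc.2 zero_le_one)
  simp only [Complex.ofReal_one, one_mul, sub_zero] at h1
  calc dist (P t u) (P t v) ≤ dist u v * Real.exp (↑(‖t‖₊ * Kf) * 1) := h1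
    _ = dist u v * Real.exp (Kf * ‖t‖) := by
        push_cast; ring_nf

/-- Uniform continuity near a compact set. -/
lemma unif_cont_near {F : Type*} [PseudoMetricSpace F] {f : E → F}
    (hf : Continuous f) {Kc : Set E} (hKc : IsCompact Kc) {ε : ℝ} (hε : 0 < ε) :
    ∃ δ > 0, ∀ b ∈ Kc, ∀ ξ, dist ξ b ≤ δ → dist (f ξ) (f b) ≤ ε := by
  have key : ∀ b : E, ∃ ρ : ℝ, 0 < ρ ∧ ∀ ξ, dist ξ b < 2*ρ → dist (f ξ) (f b) < ε/2 := by
    intro b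
    obtain ⟨ρ, hρ, h⟩ := Metric.continuousAt_iff.mp hf.continuousAt _ (half_pos hε)
    exact ⟨ρ/2, by linarith, fun ξ hξ => h (by linarith)⟩
  choose ρ hρpos hρ using key
  obtain ⟨T, hTsub, hTcov⟩ := hKc.elim_nhds_subcover (fun b => Metric.ball b (ρ b))
    (fun b _ => Metric.ball_mem_nhds b (hρpos b))
  rcases T.eq_empty_or_nonempty with hT | hT
  · refine ⟨1, one_pos, fun b hb => absurd (hTcov hb) (by simp [hT])⟩
  · refine ⟨T.inf' hT ρ, ?_, ?_⟩
    · obtain ⟨i, hi, hieq⟩ := T.exists_mem_eq_inf' hT ρ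
      rw [hieq]; exact hρpos i
    · intro b hb ξ hξ
      obtain ⟨i, hi, hbi⟩ := by simpa using hTcov hb
      have hle : T.inf' hT ρ ≤ ρ i := Finset.inf'_le ρ hi
      have h1 : dist ξ i < 2 * ρ i := by
        have := Metric.mem_ball.mp hbi
        calc dist ξ i ≤ dist ξ b + dist b i := dist_triangle _ _ _
          _ < T.inf' hT ρ + ρ i := by
              have : dist b i < ρ i := Metric.mem_ball.mp hbi
              exact add_lt_add_of_le_of_lt hξ this
          _ ≤ 2 * ρ i := by linarith
      have h2 : dist b i < 2 * ρ i := by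
        have : dist b i < ρ i := Metric.mem_ball.mp hbi
        linarith [hρpos i]
      calc dist (f ξ) (f b) ≤ dist (f ξ) (f i) + dist (f b) (f i) := dist_triangle_right _ _ _
        _ ≤ ε/2 + ε/2 := add_le_add (le_of_lt (hρ i ξ h1)) (le_of_lt (hρ i b h2))
        _ = ε := by ring

/-- Uniform first-order Taylor estimate near a compact set. -/
lemma unif_taylor (H : E → E) (hHs : ContDiff ℂ ⊤ H) {Kc : Set E} (hKc : IsCompact Kc)
    {ε : ℝ} (hε : 0 < ε) :
    ∃ δ > 0, ∀ b ∈ Kc, ∀ a, dist a b ≤ δ →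
      ‖H a - H b - fderiv ℂ H b (a - b)‖ ≤ ε * ‖a - b‖ := by
  obtain ⟨δ, hδ, hd⟩ := unif_cont_near (hHs.continuous_fderiv (by simp)) hKc hε
  refine ⟨δ, hδ, fun b hb a ha => ?_⟩
  have conv : Convex ℝ (Metric.closedBall b δ) := convex_closedBall _ _
  have hder : ∀ z ∈ Metric.closedBall b δ,
      HasFDerivWithinAt (fun z => H z - fderiv ℂ H b z)
        (fderiv ℂ H z - fderiv ℂ H b) (Metric.closedBall b δ) z := fun z _ =>
    (((hHs.differentiable (by simp) z).hasFDerivAt).sub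
      ((fderiv ℂ H b).hasFDerivAt)).hasFDerivWithinAt
  have bound : ∀ z ∈ Metric.closedBall b δ, ‖fderiv ℂ H z - fderiv ℂ H b‖ ≤ ε := fun z hz => by
    have := hd b hb z (Metric.mem_closedBall.mp hz)
    rwa [dist_eq_norm] at this
  have hmem : a ∈ Metric.closedBall b δ := Metric.mem_closedBall.mpr ha
  have := conv.norm_image_sub_le_of_norm_hasFDerivWithin_le hder bound
    (Metric.mem_closedBall_self hδ.le) hmem
  have heq : H a - fderiv ℂ H b a - (H b - fderiv ℂ H b b)
      = H a - H b - fderiv ℂ H b (a - b) := by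
    rw [map_sub]; abel
  rwa [heq] at this

/-- Crude but convenient bound for `gronwallBound`. -/
lemma gronwallBound_le_simple (δ K ε x : ℝ) (hK : 0 ≤ K) (hx : 0 ≤ x) (hδ : 0 ≤ δ) (hε : 0 ≤ ε) :
    gronwallBound δ K ε x ≤ (δ + ε * x) * Real.exp (K * x) := by
  rcases eq_or_lt_of_le hK with hK0 | hKpos
  · rw [← hK0, gronwallBound_K0]
    simp
  · rw [gronwallBound_of_K_ne_0 (ne_of_gt hKpos)]
    have key : Real.exp (K * x) - 1 ≤ K * x * Real.exp (K * x) := by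
      have h1 : 1 - (K*x) ≤ Real.exp (-(K*x)) := by
        have := Real.add_one_le_exp (-(K*x)); linarith
      have h2 : Real.exp (K*x) * (1 - (K*x)) ≤ Real.exp (K*x) * Real.exp (-(K*x)) :=
        mul_le_mul_of_nonneg_left h1 (Real.exp_pos _).le
      rw [← Real.exp_add] at h2
      simp only [add_neg_cancel, Real.exp_zero] at h2
      nlinarith
    have hKx : 0 ≤ K * x := mul_nonneg hKpos.le hx
    have : ε / K * (Real.exp (K * x) - 1) ≤ ε * x * Real.exp (K * x) := by
      rw [div_mul_eq_mul_div, div_le_iff₀ hKpos]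
      calc ε * (Real.exp (K*x) - 1) ≤ ε * (K * x * Real.exp (K*x)) :=
            mul_le_mul_of_nonneg_left key hε
        _ = ε * x * Real.exp (K * x) * K := by ring
    nlinarith [Real.exp_pos (K*x)]

set_option maxHeartbeats 1000000 in
lemma key_deriv {H X : E → E} {K : NNReal}
    (hHl : LipschitzWith K H)
    (hHs : ContDiff ℂ ⊤ H) (hXs : ContDiff ℂ ⊤ X)
    (hbracket : ∀ x, fderiv ℂ X x (H x) - fderiv ℂ H x (X x) = X x)
    {ΦH ΦX : ℂ → E → E}
    (hΦH0 : ∀ x, ΦH 0 x = x)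
    (hΦH : ∀ t x, HasDerivAt (fun s => ΦH s x) (H (ΦH t x)) t)
    (hΦX : ∀ t x, HasDerivAt (fun s => ΦX s x) (X (ΦX t x)) t)
    (t σ₀ : ℂ) (x : E) :
    HasDerivAt (fun σ => ΦH t (ΦX σ x)) (Complex.exp (-t) • X (ΦH t (ΦX σ₀ x))) σ₀ := by
  set y₀ := ΦX σ₀ x with hy₀
  set G : ℂ → E := fun τ => ΦH τ y₀ with hGdef
  set V : ℂ → E := fun τ => Complex.exp (-τ) • X (G τ) with hVdef
  -- variational equation
  have hV : ∀ τ, HasDerivAt V (fderiv ℂ H (G τ) (V τ)) τ := by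
    intro τ
    have hG : HasDerivAt G (H (G τ)) τ := hΦH τ y₀
    have hXG : HasDerivAt (fun τ => X (G τ)) (fderiv ℂ X (G τ) (H (G τ))) τ :=
      ((hXs.differentiable (by simp) (G τ)).hasFDerivAt).comp_hasDerivAt τ hG
    have hexp : HasDerivAt (fun τ : ℂ => Complex.exp (-τ)) (-Complex.exp (-τ)) τ := by
      have := (Complex.hasDerivAt_exp (-τ)).comp τ ((hasDerivAt_id τ).neg)
      simpa [Function.comp_def] using this
    have h1 := hexp.smul hXG
    change HasDerivAt (fun τ => Complex.exp (-τ) • X (G τ)) _ τ at h1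
    convert h1 using 1
    have hb : fderiv ℂ H (G τ) (X (G τ))
        = fderiv ℂ X (G τ) (H (G τ)) - X (G τ) := by
      have hb0 := hbracket (G τ)
      rw [sub_eq_iff_eq_add] at hb0
      rw [hb0]; abel
    rw [hVdef]
    simp only
    rw [(fderiv ℂ H (G τ)).map_smul, hb]
    module
  -- compact set and bound on fderiv H
  have hcontG : Continuous (fun r : ℝ => G ((r:ℂ)*t)) := continuous_iff_continuousAt.2
    fun r => (hasDerivAt_real_line t (hΦH _ y₀)).differentiableAt.continuousAt
  have hKcC : IsCompact ((fun r : ℝ => G ((r:ℂ)*t)) '' Icc 0 1) :=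
    isCompact_Icc.image hcontG
  obtain ⟨M0, hM0⟩ := hKcC.exists_bound_of_continuousOn
    ((hHs.continuous_fderiv (by simp)).continuousOn)
  set M := max M0 0 with hMdef
  have hMnn : 0 ≤ M := le_max_right _ _
  have hM : ∀ r ∈ Icc (0:ℝ) 1, ‖fderiv ℂ H (G ((r:ℂ)*t))‖ ≤ M :=
    fun r hr => le_trans (hM0 _ ⟨r, hr, rfl⟩) (le_max_left _ _)
  -- constants
  set CH := Real.exp ((K : ℝ) * ‖t‖) with hCHdef
  have hCHpos : 0 < CH := Real.exp_pos _
  set CY := ‖X y₀‖ + 1 with hCYdef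
  have hCYpos : 0 < CY := by positivity
  -- local Lipschitz bound for σ ↦ ΦX σ x near σ₀
  have hyd : HasDerivAt (fun σ => ΦX σ x) (X y₀) σ₀ := hΦX σ₀ x
  have hyO := hasDerivAt_iff_isLittleO.mp hyd
  have hylip : ∀ᶠ σ in nhds σ₀, ‖ΦX σ x - ΦX σ₀ x‖ ≤ CY * ‖σ - σ₀‖ := by
    filter_upwards [hyO.def one_pos] with σ hσ
    have h1 : ‖ΦX σ x - ΦX σ₀ x‖
        ≤ ‖ΦX σ x - ΦX σ₀ x - (σ - σ₀) • X y₀‖ + ‖(σ - σ₀) • X y₀‖ := by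
      have := norm_add_le (ΦX σ x - ΦX σ₀ x - (σ - σ₀) • X y₀) ((σ - σ₀) • X y₀)
      simpa using this
    rw [norm_smul] at h1
    calc ‖ΦX σ x - ΦX σ₀ x‖ ≤ 1 * ‖σ - σ₀‖ + ‖σ - σ₀‖ * ‖X y₀‖ := by
          refine h1.trans (add_le_add ?_ le_rfl); simpa using hσ
      _ = CY * ‖σ - σ₀‖ := by rw [hCYdef]; ring
  -- the little-o goal
  rw [hasDerivAt_iff_isLittleO, Asymptotics.isLittleO_iff]
  intro ε' hε'
  set Cf := Real.exp (‖t‖ * M) with hCfdef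
  have hCfpos : 0 < Cf := Real.exp_pos _
  set q := ‖t‖ * (CH * CY) with hqdef
  have hqnn : 0 ≤ q := by positivity
  set ε := ε' / (2 * Cf * (1 + q)) with hεdef
  have hεpos : 0 < ε := by positivity
  obtain ⟨δ, hδpos, hTay⟩ := unif_taylor H hHs hKcC hεpos
  set ε₂ := ε' / (2 * Cf) with hε₂def
  have hε₂pos : 0 < ε₂ := by positivity
  have hball : ∀ᶠ σ in nhds σ₀, ‖σ - σ₀‖ ≤ δ / (CH * CY) := by
    have hpos : 0 < δ / (CH * CY) := by positivity
    filter_upwards [Metric.closedBall_mem_nhds σ₀ hpos] with σ hσ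
    simpa [dist_eq_norm] using hσ
  filter_upwards [hylip, hyO.def hε₂pos, hball] with σ hσ1 hσ2 hσ3
  -- setup for Gronwall
  set yσ := ΦX σ x with hyσ
  set A : ℝ → E := fun r => ΦH ((r:ℂ)*t) yσ with hAdef
  set B : ℝ → E := fun r => G ((r:ℂ)*t) with hBdef
  set Er : ℝ → E := fun r => A r - B r - (σ - σ₀) • V ((r:ℂ)*t) with hErdef
  set Er' : ℝ → E := fun r =>
    t • H (A r) - t • H (B r) - (σ - σ₀) • (t • fderiv ℂ H (B r) (V ((r:ℂ)*t))) with hEr'def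
  have hED : ∀ r : ℝ, HasDerivAt Er (Er' r) r := by
    intro r
    have hA' := hasDerivAt_real_line t (hΦH ((r:ℂ)*t) yσ)
    have hB' := hasDerivAt_real_line t (hΦH ((r:ℂ)*t) y₀)
    have hV' := hasDerivAt_real_line t (hV ((r:ℂ)*t))
    exact (hA'.sub hB').sub (hV'.const_smul (σ - σ₀))
  -- distance bounds
  have hyy : dist yσ y₀ ≤ CY * ‖σ - σ₀‖ := by rw [dist_eq_norm]; exact hσ1
  have hABr : ∀ r ∈ Icc (0:ℝ) 1, dist (A r) (B r) ≤ CH * (CY * ‖σ - σ₀‖) := by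
    intro r hr
    have h1 := flow_lipschitz hHl hΦH0 hΦH ((r:ℂ)*t) yσ y₀
    have h2 : Real.exp ((K:ℝ) * ‖(r:ℂ)*t‖) ≤ CH := by
      rw [hCHdef]
      apply Real.exp_le_exp.2
      have : ‖(r:ℂ)*t‖ ≤ ‖t‖ := by
        rw [norm_mul, Complex.norm_real, Real.norm_eq_abs]
        have habs : |r| ≤ 1 := abs_le.2 ⟨by linarith [hr.1], hr.2⟩
        nlinarith [norm_nonneg t, abs_nonneg r]
      nlinarith [K.coe_nonneg]
    calc dist (A r) (B r) ≤ dist yσ y₀ * Real.exp ((K:ℝ) * ‖(r:ℂ)*t‖) := h1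
      _ ≤ (CY * ‖σ - σ₀‖) * CH := by
          apply mul_le_mul hyy h2 (Real.exp_pos _).le (by positivity)
      _ = CH * (CY * ‖σ - σ₀‖) := by ring
  have hABδ : ∀ r ∈ Icc (0:ℝ) 1, dist (A r) (B r) ≤ δ := by
    intro r hr
    refine (hABr r hr).trans ?_
    rw [le_div_iff₀ (by positivity)] at hσ3
    nlinarith
  -- derivative bound
  have hEbound : ∀ r ∈ Ico (0:ℝ) 1,
      ‖Er' r‖ ≤ (‖t‖ * M) * ‖Er r‖ + ‖t‖ * (ε * (CH * (CY * ‖σ - σ₀‖))) := by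
    intro r hr
    have hrIcc : r ∈ Icc (0:ℝ) 1 := ⟨hr.1, hr.2.le⟩
    have hT := hTay (B r) ⟨r, hrIcc, rfl⟩ (A r) (hABδ r hrIcc)
    have hX2 : fderiv ℂ H (B r) (Er r)
        = fderiv ℂ H (B r) (A r - B r) - (σ - σ₀) • fderiv ℂ H (B r) (V ((r:ℂ)*t)) := by
      rw [hErdef]
      simp only [map_sub, map_smul]
    have hid : Er' r = t • ((H (A r) - H (B r) - fderiv ℂ H (B r) (A r - B r))
        + fderiv ℂ H (B r) (Er r)) := by
      rw [hEr'def, hX2]; module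
    rw [hid, norm_smul]
    have hn1 : ‖H (A r) - H (B r) - fderiv ℂ H (B r) (A r - B r)‖
        ≤ ε * (CH * (CY * ‖σ - σ₀‖)) := by
      refine hT.trans ?_
      have : ‖A r - B r‖ ≤ CH * (CY * ‖σ - σ₀‖) := by
        rw [← dist_eq_norm]; exact hABr r hrIcc
      nlinarith
    have hn2 : ‖fderiv ℂ H (B r) (Er r)‖ ≤ M * ‖Er r‖ :=
      le_trans ((fderiv ℂ H (B r)).le_opNorm _)
        (mul_le_mul_of_nonneg_right (hM r hrIcc) (norm_nonneg _))
    calc ‖t‖ * ‖(H (A r) - H (B r) - fderiv ℂ H (B r) (A r - B r))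
          + fderiv ℂ H (B r) (Er r)‖
        ≤ ‖t‖ * (ε * (CH * (CY * ‖σ - σ₀‖)) + M * ‖Er r‖) := by
          refine mul_le_mul_of_nonneg_left ?_ (norm_nonneg t)
          exact (norm_add_le _ _).trans (add_le_add hn1 hn2)
      _ = (‖t‖ * M) * ‖Er r‖ + ‖t‖ * (ε * (CH * (CY * ‖σ - σ₀‖))) := by ring
  -- Gronwall
  have hgr := norm_le_gronwallBound_of_norm_deriv_right_le (f := Er) (f' := Er')
    (a := 0) (b := 1) (δ := ε₂ * ‖σ - σ₀‖) (K := ‖t‖ * M)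
    (ε := ‖t‖ * (ε * (CH * (CY * ‖σ - σ₀‖))))
    (Continuous.continuousOn (continuous_iff_continuousAt.2
      fun r => (hED r).differentiableAt.continuousAt))
    (fun r _ => (hED r).hasDerivWithinAt)
    (by
      have hE0 : Er 0 = yσ - y₀ - (σ - σ₀) • X y₀ := by
        rw [hErdef]
        simp [hAdef, hBdef, hVdef, hGdef, hΦH0]
      rw [hE0]
      exact hσ2)
    hEbound 1 (right_mem_Icc.2 zero_le_one)
  -- conclude
  have hgoal : ΦH t (ΦX σ x) - ΦH t (ΦX σ₀ x)
      - (σ - σ₀) • (Complex.exp (-t) • X (ΦH t (ΦX σ₀ x))) = Er 1 := by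
    rw [hErdef]
    simp [hAdef, hBdef, hVdef, hGdef]; rfl
  rw [hgoal]
  have hb1 := gronwallBound_le_simple (ε₂ * ‖σ - σ₀‖) (‖t‖ * M)
    (‖t‖ * (ε * (CH * (CY * ‖σ - σ₀‖)))) 1
    (by positivity) zero_le_one (by positivity) (by positivity)
  have hfin : (ε₂ * ‖σ - σ₀‖ + ‖t‖ * (ε * (CH * (CY * ‖σ - σ₀‖))) * 1)
      * Real.exp (‖t‖ * M * 1) ≤ ε' * ‖σ - σ₀‖ := by
    have hq1 : (0:ℝ) < 1 + q := by linarith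
    have h1' : ε₂ * Cf = ε' / 2 := by
      rw [hε₂def]; field_simp
    have h3 : ε * q * Cf ≤ ε' / 2 := by
      have h4 : ε * Cf * (1 + q) = ε' / 2 := by
        rw [hεdef]; field_simp [hCfpos.ne', hq1.ne']
      nlinarith [mul_pos hεpos hCfpos]
    have hCfe : Real.exp (‖t‖ * M * 1) = Cf := by rw [hCfdef]; ring_nf
    rw [hCfe]
    have hq' : ‖t‖ * (ε * (CH * (CY * ‖σ - σ₀‖))) = ε * q * ‖σ - σ₀‖ := by
      rw [hqdef]; ring
    rw [hq']
    have hσnn : 0 ≤ ‖σ - σ₀‖ := norm_nonneg _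
    nlinarith [mul_le_mul_of_nonneg_right h3 hσnn, hσnn,
      mul_nonneg hεpos.le hCfpos.le, h1']
  calc ‖Er 1‖ ≤ gronwallBound (ε₂ * ‖σ - σ₀‖) (‖t‖ * M)
        (‖t‖ * (ε * (CH * (CY * ‖σ - σ₀‖)))) (1 - 0) := hgr
    _ ≤ (ε₂ * ‖σ - σ₀‖ + ‖t‖ * (ε * (CH * (CY * ‖σ - σ₀‖))) * 1)
        * Real.exp (‖t‖ * M * 1) := by rw [sub_zero]; exact hb1
    _ ≤ ε' * ‖σ - σ₀‖ := hfin

set_option maxHeartbeats 1000000 in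
lemma rhs_deriv {H X : E → E} {K L : NNReal}
    (hHl : LipschitzWith K H) (hXl : LipschitzWith L X)
    (hHs : ContDiff ℂ ⊤ H) (hXs : ContDiff ℂ ⊤ X)
    (hbracket : ∀ x, fderiv ℂ X x (H x) - fderiv ℂ H x (X x) = X x)
    (c : ℂ) {ΦH ΦX : ℂ → E → E}
    (hΦH0 : ∀ x, ΦH 0 x = x)
    (hΦH : ∀ t x, HasDerivAt (fun s => ΦH s x) (H (ΦH t x)) t)
    (hΦX : ∀ t x, HasDerivAt (fun s => ΦX s x) (X (ΦX t x)) t)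
    (t₀ : ℂ) (x : E) :
    HasDerivAt (fun t => ΦH t (ΦX (c * (Complex.exp t - 1)) x))
      (H (ΦH t₀ (ΦX (c * (Complex.exp t₀ - 1)) x))
        + c • X (ΦH t₀ (ΦX (c * (Complex.exp t₀ - 1)) x))) t₀ := by
  set g : ℂ → ℂ := fun t => c * (Complex.exp t - 1) with hgdef
  set φ : ℂ → ℂ → E := fun t σ => ΦH t (ΦX σ x) with hφdef
  set b₀ : E := φ t₀ (g t₀) with hb₀def
  set W : ℂ → E := fun t => Complex.exp (-t) • X (φ t (g t₀)) with hWdef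
  have hφt : ∀ σ t, HasDerivAt (fun t => φ t σ) (H (φ t σ)) t := fun σ t => hΦH t (ΦX σ x)
  have hφσ : ∀ t ξ, HasDerivAt (fun σ => φ t σ) (Complex.exp (-t) • X (φ t ξ)) ξ :=
    fun t ξ => key_deriv hHl hHs hXs hbracket hΦH0 hΦH hΦX t ξ x
  have hg : ∀ t, HasDerivAt g (c * Complex.exp t) t := by
    intro t
    simpa using ((Complex.hasDerivAt_exp t).sub_const 1).const_mul c
  -- W is differentiable at t₀
  have hexp : ∀ τ : ℂ, HasDerivAt (fun τ : ℂ => Complex.exp (-τ)) (-Complex.exp (-τ)) τ := by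
    intro τ
    have := (Complex.hasDerivAt_exp (-τ)).comp τ ((hasDerivAt_id τ).neg)
    simpa [Function.comp_def] using this
  have hWd : DifferentiableAt ℂ W t₀ := by
    apply DifferentiableAt.smul
    · exact (hexp t₀).differentiableAt
    · exact ((hXs.differentiable (by simp)).differentiableAt).comp t₀
        (hφt (g t₀) t₀).differentiableAt
  -- the product term
  have hFm : HasDerivAt (fun t => (g t - g t₀) • W t) (c • X b₀) t₀ := by
    have h := (((hg t₀).sub_const (g t₀))).smul hWd.hasDerivAt
    simp only [sub_self, zero_smul, add_zero] at h
    change HasDerivAt (fun t => (g t - g t₀) • W t) _ t₀ at h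
    convert h using 1
    rw [hWdef]
    simp only [← hb₀def, smul_smul]
    rw [mul_assoc, ← Complex.exp_add]
    simp
  have hT3 : HasDerivAt (fun t => φ t (g t₀)) (H b₀) t₀ := hφt (g t₀) t₀
  -- T1 is little-o
  have hT1o : (fun t => φ t (g t) - φ t (g t₀) - (g t - g t₀) • W t)
      =o[nhds t₀] (fun t => t - t₀) := by
    rw [Asymptotics.isLittleO_iff]
    intro ε' hε'
    set CE := Real.exp (‖t₀‖ + 1) with hCEdef
    have hCEpos : 0 < CE := Real.exp_pos _
    set CHl := Real.exp ((K:ℝ) * (‖t₀‖ + 1)) with hCHldef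
    have hCHlpos : 0 < CHl := Real.exp_pos _
    set CY' := ‖X (ΦX (g t₀) x)‖ + 1 with hCY'def
    have hCY'pos : 0 < CY' := by positivity
    set Cg := ‖c * Complex.exp t₀‖ + 1 with hCgdef
    have hCgpos : 0 < Cg := by positivity
    set Cq := CE * ((L:ℝ) * (CHl * CY')) with hCqdef
    have hCqnn : 0 ≤ Cq := by positivity
    -- local Lipschitz bound for σ ↦ ΦX σ x at g t₀
    have hyO := hasDerivAt_iff_isLittleO.mp (hΦX (g t₀) x)
    have hylip : ∀ᶠ ξ in nhds (g t₀), ‖ΦX ξ x - ΦX (g t₀) x‖ ≤ CY' * ‖ξ - g t₀‖ := by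
      filter_upwards [hyO.def one_pos] with ξ hξ
      have h1 : ‖ΦX ξ x - ΦX (g t₀) x‖
          ≤ ‖ΦX ξ x - ΦX (g t₀) x - (ξ - g t₀) • X (ΦX (g t₀) x)‖
            + ‖(ξ - g t₀) • X (ΦX (g t₀) x)‖ := by
        have := norm_add_le (ΦX ξ x - ΦX (g t₀) x - (ξ - g t₀) • X (ΦX (g t₀) x))
          ((ξ - g t₀) • X (ΦX (g t₀) x))
        simpa using this
      rw [norm_smul] at h1
      calc ‖ΦX ξ x - ΦX (g t₀) x‖ ≤ 1 * ‖ξ - g t₀‖ + ‖ξ - g t₀‖ * ‖X (ΦX (g t₀) x)‖ := by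
            refine h1.trans (add_le_add ?_ le_rfl); simpa using hξ
        _ = CY' * ‖ξ - g t₀‖ := by rw [hCY'def]; ring
    obtain ⟨ρ, hρpos, hρ⟩ := Metric.eventually_nhds_iff.mp hylip
    -- local Lipschitz bound for g at t₀
    have hgO := hasDerivAt_iff_isLittleO.mp (hg t₀)
    have hglip : ∀ᶠ t in nhds t₀, ‖g t - g t₀‖ ≤ Cg * ‖t - t₀‖ := by
      filter_upwards [hgO.def one_pos] with t ht
      have h1 : ‖g t - g t₀‖
          ≤ ‖g t - g t₀ - (t - t₀) • (c * Complex.exp t₀)‖ + ‖(t - t₀) • (c * Complex.exp t₀)‖ := by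
        have := norm_add_le (g t - g t₀ - (t - t₀) • (c * Complex.exp t₀))
          ((t - t₀) • (c * Complex.exp t₀))
        simpa using this
      rw [norm_smul] at h1
      calc ‖g t - g t₀‖ ≤ 1 * ‖t - t₀‖ + ‖t - t₀‖ * ‖c * Complex.exp t₀‖ := by
            refine h1.trans (add_le_add ?_ le_rfl); simpa using ht
        _ = Cg * ‖t - t₀‖ := by rw [hCgdef]; ring
    -- eventual smallness conditions
    have hev1 : ∀ᶠ t in nhds t₀, ‖t - t₀‖ ≤ 1 := by
      filter_upwards [Metric.closedBall_mem_nhds t₀ one_pos] with t ht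
      simpa [dist_eq_norm] using ht
    have hev3 : ∀ᶠ t in nhds t₀, ‖g t - g t₀‖ < ρ := by
      have hcont : ContinuousAt g t₀ := (hg t₀).differentiableAt.continuousAt
      have := hcont.tendsto (Metric.ball_mem_nhds (g t₀) hρpos)
      filter_upwards [this] with t ht
      simpa [dist_eq_norm] using ht
    have hev4 : ∀ᶠ t in nhds t₀, ‖t - t₀‖ ≤ ε' / (Cq * Cg * Cg + 1) := by
      have hpos : 0 < ε' / (Cq * Cg * Cg + 1) := by positivity
      filter_upwards [Metric.closedBall_mem_nhds t₀ hpos] with t ht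
      simpa [dist_eq_norm] using ht
    filter_upwards [hev1, hglip, hev3, hev4] with t ht1 ht2 ht3 ht4
    -- mean value argument
    set r := ‖g t - g t₀‖ with hrdef
    have hrnn : 0 ≤ r := norm_nonneg _
    set s : Set ℂ := Metric.closedBall (g t₀) r with hsdef
    have hders : ∀ ξ ∈ s, HasFDerivWithinAt (fun ξ => φ t ξ - ξ • W t)
        ((1 : ℂ →L[ℂ] ℂ).smulRight (Complex.exp (-t) • X (φ t ξ) - W t)) s ξ := by
      intro ξ _
      have h1 : HasDerivAt (fun ξ => φ t ξ - ξ • W t)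
          (Complex.exp (-t) • X (φ t ξ) - W t) ξ := by
        have h2 := (hφσ t ξ).sub ((hasDerivAt_id ξ).smul_const (W t))
        simpa [Pi.sub_def] using h2
      exact h1.hasFDerivAt.hasFDerivWithinAt
    have hbound : ∀ ξ ∈ s,
        ‖(1 : ℂ →L[ℂ] ℂ).smulRight (Complex.exp (-t) • X (φ t ξ) - W t)‖ ≤ Cq * r := by
      intro ξ hξ
      have hξd : dist ξ (g t₀) ≤ r := Metric.mem_closedBall.mp hξ
      have hξρ : dist ξ (g t₀) < ρ := lt_of_le_of_lt hξd ht3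
      have hXlip : ‖ΦX ξ x - ΦX (g t₀) x‖ ≤ CY' * ‖ξ - g t₀‖ := hρ hξρ
      have hflow : dist (ΦH t (ΦX ξ x)) (ΦH t (ΦX (g t₀) x))
          ≤ dist (ΦX ξ x) (ΦX (g t₀) x) * Real.exp ((K:ℝ) * ‖t‖) :=
        flow_lipschitz hHl hΦH0 hΦH t _ _
      have hKt : Real.exp ((K:ℝ) * ‖t‖) ≤ CHl := by
        rw [hCHldef]
        apply Real.exp_le_exp.2
        have : ‖t‖ ≤ ‖t₀‖ + 1 := by
          calc ‖t‖ = ‖t₀ + (t - t₀)‖ := by ring_nf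
            _ ≤ ‖t₀‖ + ‖t - t₀‖ := norm_add_le _ _
            _ ≤ ‖t₀‖ + 1 := by linarith
        nlinarith [K.coe_nonneg]
      have hEt : ‖Complex.exp (-t)‖ ≤ CE := by
        rw [Complex.norm_exp, hCEdef]
        apply Real.exp_le_exp.2
        have h1 : (-t).re ≤ ‖t‖ := by
          calc (-t).re ≤ |(-t).re| := le_abs_self _
            _ ≤ ‖-t‖ := Complex.abs_re_le_norm _
            _ = ‖t‖ := by simp
        have h2 : ‖t‖ ≤ ‖t₀‖ + 1 := by
          calc ‖t‖ = ‖t₀ + (t - t₀)‖ := by ring_nf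
            _ ≤ ‖t₀‖ + ‖t - t₀‖ := norm_add_le _ _
            _ ≤ ‖t₀‖ + 1 := by linarith
        linarith
      have hnorm1 : ‖(1 : ℂ →L[ℂ] ℂ)‖ = 1 := by
        rw [ContinuousLinearMap.one_def, ContinuousLinearMap.norm_id]
      have key : ‖Complex.exp (-t) • X (φ t ξ) - W t‖ ≤ Cq * r := by
        rw [hWdef]
        have : Complex.exp (-t) • X (φ t ξ) - Complex.exp (-t) • X (φ t (g t₀))
            = Complex.exp (-t) • (X (φ t ξ) - X (φ t (g t₀))) := (smul_sub _ _ _).symm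
        rw [this, norm_smul]
        have hXd : ‖X (φ t ξ) - X (φ t (g t₀))‖ ≤ (L:ℝ) * ‖φ t ξ - φ t (g t₀)‖ := by
          have := hXl.dist_le_mul (φ t ξ) (φ t (g t₀))
          simpa [dist_eq_norm] using this
        have hφd : ‖φ t ξ - φ t (g t₀)‖ ≤ CHl * (CY' * r) := by
          rw [hφdef]
          simp only
          rw [← dist_eq_norm]
          calc dist (ΦH t (ΦX ξ x)) (ΦH t (ΦX (g t₀) x))
              ≤ dist (ΦX ξ x) (ΦX (g t₀) x) * Real.exp ((K:ℝ) * ‖t‖) := hflow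
            _ ≤ (CY' * r) * CHl := by
                apply mul_le_mul _ hKt (Real.exp_pos _).le (by positivity)
                rw [dist_eq_norm]
                refine hXlip.trans ?_
                have : ‖ξ - g t₀‖ ≤ r := by rwa [← dist_eq_norm]
                nlinarith
            _ = CHl * (CY' * r) := by ring
        calc ‖Complex.exp (-t)‖ * ‖X (φ t ξ) - X (φ t (g t₀))‖
            ≤ CE * ((L:ℝ) * (CHl * (CY' * r))) := by
              apply mul_le_mul hEt _ (norm_nonneg _) hCEpos.le
              refine hXd.trans ?_
              apply mul_le_mul_of_nonneg_left hφd L.coe_nonneg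
          _ = Cq * r := by rw [hCqdef]; ring
      calc ‖(1 : ℂ →L[ℂ] ℂ).smulRight (Complex.exp (-t) • X (φ t ξ) - W t)‖
          ≤ ‖(1 : ℂ →L[ℂ] ℂ)‖ * ‖Complex.exp (-t) • X (φ t ξ) - W t‖ :=
            ContinuousLinearMap.norm_smulRight_apply _ _ |>.le
        _ ≤ 1 * (Cq * r) := by rw [hnorm1]; simpa using key
        _ = Cq * r := one_mul _
    have hmvt := (convex_closedBall (g t₀) r).norm_image_sub_le_of_norm_hasFDerivWithin_le
      hders hbound (Metric.mem_closedBall_self hrnn)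
      (Metric.mem_closedBall.mpr (dist_eq_norm (g t) (g t₀)).le)
    -- hmvt : ‖(φ t (g t) - g t • W t) - (φ t (g t₀) - g t₀ • W t)‖ ≤ Cq * r * ‖g t - g t₀‖
    have heq : φ t (g t) - g t • W t - (φ t (g t₀) - g t₀ • W t)
        = φ t (g t) - φ t (g t₀) - (g t - g t₀) • W t := by
      rw [sub_smul]; abel
    rw [heq] at hmvt
    refine hmvt.trans ?_
    have h1 : Cq * r * ‖g t - g t₀‖ ≤ Cq * (Cg * ‖t - t₀‖) * (Cg * ‖t - t₀‖) := by
      have hsq : r * r ≤ (Cg * ‖t - t₀‖) * (Cg * ‖t - t₀‖) :=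
        mul_le_mul ht2 ht2 hrnn (by positivity)
      nlinarith [hCqnn, hsq]
    refine h1.trans ?_
    rw [le_div_iff₀ (by positivity : (0:ℝ) < Cq * Cg * Cg + 1)] at ht4
    nlinarith [norm_nonneg (t - t₀), mul_nonneg (mul_nonneg hCqnn hCgpos.le) hCgpos.le]
  -- assemble
  rw [hasDerivAt_iff_isLittleO]
  have hT2o := hasDerivAt_iff_isLittleO.mp hFm
  have hT3o := hasDerivAt_iff_isLittleO.mp hT3
  have hsum := (hT1o.add hT2o).add hT3o
  have heq2 : (fun t => φ t (g t) - φ t₀ (g t₀) - (t - t₀) • (H b₀ + c • X b₀))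
      = (fun t => (φ t (g t) - φ t (g t₀) - (g t - g t₀) • W t)
        + ((g t - g t₀) • W t - (g t₀ - g t₀) • W t₀ - (t - t₀) • (c • X b₀))
        + (φ t (g t₀) - φ t₀ (g t₀) - (t - t₀) • H b₀)) := by
    funext t
    rw [smul_add]
    simp only [sub_self, zero_smul]
    abel
  have hgoal : (fun s => φ s (g s) - φ t₀ (g t₀) - (s - t₀) • (H b₀ + c • X b₀))
      =o[nhds t₀] fun s => s - t₀ := by
    rw [← hb₀def, heq2]; exact hsum
  exact hgoal

end helpers

/-- if `[H,X] = X` then the flows satisfy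
`Φ_{H+cX}^t = Φ_H^t ∘ Φ_X^{c(e^t−1)}`. Here `H` and `X` are (globally Lipschitz,
smooth) vector fields on a complex normed space, `Φ_H, Φ_X, Φ` are flows of `H`,
`X` and `H + cX` respectively, and the Lie bracket is
`[H,X](x) = DX(x)·H(x) − DH(x)·X(x)`. -/
theorem stmt_7 {E : Type*} [NormedAddCommGroup E] [NormedSpace ℂ E]
    (H X : E → E) (K L : NNReal)
    (hHl : LipschitzWith K H) (hXl : LipschitzWith L X)
    (hHs : ContDiff ℂ ⊤ H) (hXs : ContDiff ℂ ⊤ X)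
    (hbracket : ∀ x, fderiv ℂ X x (H x) - fderiv ℂ H x (X x) = X x)
    (c : ℂ) (ΦH ΦX Φ : ℂ → E → E)
    (hΦH0 : ∀ x, ΦH 0 x = x) (hΦX0 : ∀ x, ΦX 0 x = x) (hΦ0 : ∀ x, Φ 0 x = x)
    (hΦH : ∀ t x, HasDerivAt (fun s => ΦH s x) (H (ΦH t x)) t)
    (hΦX : ∀ t x, HasDerivAt (fun s => ΦX s x) (X (ΦX t x)) t)
    (hΦ : ∀ t x, HasDerivAt (fun s => Φ s x) (H (Φ t x) + c • X (Φ t x)) t) :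
    ∀ t x, Φ t x = ΦH t (ΦX (c * (Complex.exp t - 1)) x) := by
  intro t x
  have hlip : LipschitzWith (K + ‖c‖₊ * L) (fun y => H y + c • X y) :=
    hHl.add ((lipschitzWith_smul c).comp hXl)
  have hb := fun τ => rhs_deriv hHl hXl hHs hXs hbracket c hΦH0 hΦH hΦX τ x
  have h0 : Φ 0 x = ΦH 0 (ΦX (c * (Complex.exp 0 - 1)) x) := by
    simp [hΦ0, hΦH0, hΦX0]
  exact ode_unique_complex hlip (fun τ => hΦ τ x) hb h0 t
end

section
/- Let λ₁,…,λₙ be nonzero complex numbers, h = Σ_I a_I x^I a convergent power series near 0 ∈ ℂⁿ with a_I = 0 whenever ⟨λ,I⟩ = −1. Then the power series g = Σ_I b_I x^I with b_I = −a_I/(1 + ⟨λ,I⟩) (and b_I = 0 when ⟨λ,I⟩ = −1) converges near 0 and satisfies (Σᵢ λᵢ xᵢ ∂g/∂xᵢ) + g + h = 0. -/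
open Finset

lemma aux_summable_pi (g : ℕ → ℝ) (hg : Summable g) (hg0 : ∀ i, 0 ≤ g i) (n : ℕ) :
    Summable (fun I : Fin n → ℕ => ∏ j, g (I j)) := by
  induction n with
  | zero =>
      haveI : Finite (Fin 0 → ℕ) := Finite.of_subsingleton
      exact Summable.of_finite
  | succ n ih =>
      have h2 : Summable (fun p : ℕ × (Fin n → ℕ) => g p.1 * ∏ j, g (p.2 j)) :=
        Summable.mul_of_nonneg (f := g) (g := fun I : Fin n → ℕ => ∏ j, g (I j))
          hg ih hg0 (fun I => Finset.prod_nonneg fun j _ => hg0 _)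
      apply ((Fin.consEquiv fun _ : Fin (n+1) => ℕ).summable_iff).mp
      have he : ((fun I : Fin (n+1) → ℕ => ∏ j, g (I j)) ∘ (Fin.consEquiv fun _ : Fin (n+1) => ℕ))
          = fun p : ℕ × (Fin n → ℕ) => g p.1 * ∏ j, g (p.2 j) := by
        funext p
        simp [Fin.prod_univ_succ]
      rw [he]; exact h2

lemma aux_sum_succ_le_prod : ∀ n : ℕ, ∀ I : Fin n → ℕ, (∑ j, I j) + 1 ≤ ∏ j, (I j + 1)
  | 0, I => by simp
  | (n + 1), I => by
      have ih := aux_sum_succ_le_prod n (fun j => I j.succ)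
      rw [Fin.sum_univ_succ, Fin.prod_univ_succ]
      have h2 := Nat.mul_le_mul_left (I 0 + 1) ih
      have h3 : (I 0 + 1) * (∑ j : Fin n, I j.succ + 1)
          = I 0 * (∑ j : Fin n, I j.succ) + I 0 + (∑ j : Fin n, I j.succ) + 1 := by ring
      omega

lemma aux_g_summable : Summable (fun i : ℕ => ((i : ℝ) + 1) * (1/2) ^ i) := by
  have h1 : Summable (fun i : ℕ => (i : ℝ) ^ 1 * (1/2) ^ i) :=
    summable_pow_mul_geometric_of_norm_lt_one 1 (r := (1/2 : ℝ)) (by norm_num)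
  have h2 : Summable (fun i : ℕ => ((1:ℝ)/2) ^ i) :=
    summable_geometric_of_lt_one (by norm_num) (by norm_num)
  have h3 : (fun i : ℕ => ((i : ℝ) + 1) * (1/2) ^ i)
      = fun i : ℕ => (i : ℝ) ^ 1 * (1/2) ^ i + (1/2) ^ i := by
    funext i; ring
  rw [h3]; exact h1.add h2

noncomputable def auxD (n : ℕ) (c : ℂ) (I : Fin n → ℕ) (x : Fin n → ℂ) :
    (Fin n → ℂ) →L[ℂ] ℂ :=
  ∑ j, (c * (∏ k ∈ Finset.univ.erase j, x k ^ I k) * (I j * x j ^ (I j - 1))) •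
    ContinuousLinearMap.proj j

lemma aux_hasFDerivAt (n : ℕ) (c : ℂ) (I : Fin n → ℕ) (x : Fin n → ℂ) :
    HasFDerivAt (fun y : Fin n → ℂ => c * ∏ j, y j ^ I j) (auxD n c I x) x := by
  classical
  have h1 : ∀ j : Fin n, HasFDerivAt (fun y : Fin n → ℂ => y j ^ I j)
      (((I j : ℂ) * x j ^ (I j - 1)) •
        (ContinuousLinearMap.proj (R := ℂ) (φ := fun _ : Fin n => ℂ) j)) x := by
    intro j
    have hp := (hasDerivAt_pow (I j) (x j)).comp_hasFDerivAt x
      (ContinuousLinearMap.proj (R := ℂ) (φ := fun _ : Fin n => ℂ) j).hasFDerivAt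
    simpa [Function.comp_def] using hp
  have h2 := HasFDerivAt.finset_prod (u := Finset.univ) (fun j _ => h1 j)
  have h3 := h2.const_mul c
  have heq : auxD n c I x = c • ∑ j, (∏ k ∈ Finset.univ.erase j, x k ^ I k) •
      (((I j : ℂ) * x j ^ (I j - 1)) •
        (ContinuousLinearMap.proj (R := ℂ) (φ := fun _ : Fin n => ℂ) j)) := by
    unfold auxD
    rw [Finset.smul_sum]
    refine Finset.sum_congr rfl fun j _ => ?_
    rw [smul_smul, smul_smul, mul_assoc]
  rw [heq]
  exact h3

lemma aux_D_apply (n : ℕ) (c : ℂ) (I : Fin n → ℕ) (x : Fin n → ℂ) (i : Fin n) :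
    auxD n c I x (Pi.single i 1)
      = c * (∏ k ∈ Finset.univ.erase i, x k ^ I k) * (I i * x i ^ (I i - 1)) := by
  classical
  unfold auxD
  rw [ContinuousLinearMap.sum_apply]
  rw [Finset.sum_eq_single i]
  · simp
  · intro j _ hj
    have : (Pi.single i (1 : ℂ) : Fin n → ℂ) j = 0 := Pi.single_eq_of_ne hj 1
    simp [this]
  · intro h; exact absurd (Finset.mem_univ i) h

lemma aux_D_norm_le (n : ℕ) (c : ℂ) (I : Fin n → ℕ) (s : ℝ) (hs : 0 < s)
    (y : Fin n → ℂ) (hy : ∀ k, ‖y k‖ ≤ s) :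
    ‖auxD n c I y‖ ≤ ‖c‖ * (∑ j, (I j : ℝ)) * s ^ ((∑ j, I j) - 1) := by
  classical
  have hproj : ∀ j : Fin n,
      ‖(ContinuousLinearMap.proj j : (Fin n → ℂ) →L[ℂ] ℂ)‖ ≤ 1 := fun j =>
    ContinuousLinearMap.opNorm_le_bound _ zero_le_one fun z => by
      simpa using norm_le_pi_norm z j
  calc ‖auxD n c I y‖
      ≤ ∑ j, ‖(c * (∏ k ∈ Finset.univ.erase j, y k ^ I k) * (I j * y j ^ (I j - 1))) •
          (ContinuousLinearMap.proj (R := ℂ) (φ := fun _ : Fin n => ℂ) j)‖ :=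
        norm_sum_le _ _
    _ ≤ ∑ j, ‖c‖ * (I j : ℝ) * s ^ ((∑ j, I j) - 1) := by
        refine Finset.sum_le_sum fun j _ => ?_
        rcases Nat.eq_zero_or_pos (I j) with h0 | hpos
        · rw [h0]
          simp only [Nat.cast_zero, zero_mul, mul_zero]
          refine le_trans (ContinuousLinearMap.opNorm_smul_le _ _) ?_
          simp
        · refine le_trans (ContinuousLinearMap.opNorm_smul_le _ _) ?_
          refine le_trans (mul_le_of_le_one_right (norm_nonneg _) (hproj j)) ?_
          rw [norm_mul, norm_mul, norm_mul, norm_prod]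
          simp only [norm_pow, Complex.norm_natCast]
          have hP : ∏ k ∈ Finset.univ.erase j, ‖y k‖ ^ I k
              ≤ s ^ (∑ k ∈ Finset.univ.erase j, I k) := by
            rw [← Finset.prod_pow_eq_pow_sum]
            exact Finset.prod_le_prod (fun k _ => by positivity)
              (fun k _ => pow_le_pow_left₀ (norm_nonneg _) (hy k) _)
          have hQ : ‖y j‖ ^ (I j - 1) ≤ s ^ (I j - 1) :=
            pow_le_pow_left₀ (norm_nonneg _) (hy j) _
          calc ‖c‖ * (∏ k ∈ Finset.univ.erase j, ‖y k‖ ^ I k) * ((I j : ℝ) * ‖y j‖ ^ (I j - 1))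
              ≤ ‖c‖ * (s ^ (∑ k ∈ Finset.univ.erase j, I k)) * ((I j : ℝ) * s ^ (I j - 1)) := by
                gcongr
            _ = ‖c‖ * (I j : ℝ) * s ^ ((∑ j, I j) - 1) := by
                have hsum : (∑ k ∈ Finset.univ.erase j, I k) + (I j - 1) = (∑ j, I j) - 1 := by
                  have := Finset.add_sum_erase Finset.univ I (Finset.mem_univ j)
                  omega
                rw [← hsum, pow_add]
                ring
    _ = ‖c‖ * (∑ j, (I j : ℝ)) * s ^ ((∑ j, I j) - 1) := by
        rw [← Finset.sum_mul, ← Finset.mul_sum]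


/-- solution of the homological equation. If `λ₁,…,λₙ` are nonzero
integers and `h = Σ a_I x^I` converges near `0` with `a_I = 0` whenever
`⟨λ,I⟩ = −1`, then `g = Σ b_I x^I` with `b_I = −a_I/(1+⟨λ,I⟩)` converges near `0`
and satisfies `Σᵢ λᵢxᵢ ∂g/∂xᵢ + g + h = 0` there. (When `⟨λ,I⟩ = −1` the formula
gives `b_I = 0` since `a_I = 0`.) -/
theorem stmt_8 (n : ℕ) (lam : Fin n → ℤ) (hlam : ∀ i, lam i ≠ 0)
    (a : (Fin n → ℕ) → ℂ)
    (ha : ∀ I : Fin n → ℕ, (∑ j, (lam j : ℂ) * (I j : ℂ)) = -1 → a I = 0)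
    (r : ℝ) (hr : 0 < r)
    (hconv : ∀ x : Fin n → ℂ, (∀ i, ‖x i‖ < r) →
      Summable fun I : Fin n → ℕ => a I * ∏ j, x j ^ I j) :
    ∃ s : ℝ, 0 < s ∧ s ≤ r ∧
      ∀ x : Fin n → ℂ, (∀ i, ‖x i‖ < s) →
        (Summable fun I : Fin n → ℕ =>
          (-a I / (1 + ∑ j, (lam j : ℂ) * (I j : ℂ))) * ∏ j, x j ^ I j) ∧
        (∑ i, (lam i : ℂ) * x i *
            fderiv ℂ (fun y : Fin n → ℂ => ∑' I : Fin n → ℕ,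
              (-a I / (1 + ∑ j, (lam j : ℂ) * (I j : ℂ))) * ∏ j, y j ^ I j)
              x (Pi.single i 1))
          + (∑' I : Fin n → ℕ, (-a I / (1 + ∑ j, (lam j : ℂ) * (I j : ℂ))) * ∏ j, x j ^ I j)
          + (∑' I : Fin n → ℕ, a I * ∏ j, x j ^ I j) = 0 := by
  
  classical
  refine ⟨r/4, by positivity, by linarith, ?_⟩
  -- coefficient facts
  have hb_le : ∀ I : Fin n → ℕ,
      ‖-a I / (1 + ∑ j, (lam j : ℂ) * (I j : ℂ))‖ ≤ ‖a I‖ := by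
    intro I
    by_cases h0 : (1 : ℂ) + ∑ j, (lam j : ℂ) * (I j : ℂ) = 0
    · have hI : (∑ j, (lam j : ℂ) * (I j : ℂ)) = -1 := by linear_combination h0
      rw [ha I hI]
      simp
    · have hcast : (1 : ℂ) + ∑ j, (lam j : ℂ) * (I j : ℂ)
          = ((1 + ∑ j, lam j * (I j : ℤ) : ℤ) : ℂ) := by push_cast; ring
      have hmne : (1 + ∑ j, lam j * (I j : ℤ)) ≠ 0 := by
        intro h
        apply h0
        rw [hcast, h]
        simp
      have h1le : (1 : ℝ) ≤ ‖(1 : ℂ) + ∑ j, (lam j : ℂ) * (I j : ℂ)‖ := by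
        rw [hcast, Complex.norm_intCast]
        exact_mod_cast Int.one_le_abs hmne
      rw [norm_div, norm_neg]
      exact div_le_self (norm_nonneg _) h1le
  have hb_mul : ∀ I : Fin n → ℕ,
      (-a I / (1 + ∑ j, (lam j : ℂ) * (I j : ℂ))) * (1 + ∑ j, (lam j : ℂ) * (I j : ℂ))
        = -a I := by
    intro I
    by_cases h0 : (1 : ℂ) + ∑ j, (lam j : ℂ) * (I j : ℂ) = 0
    · have hI : (∑ j, (lam j : ℂ) * (I j : ℂ)) = -1 := by linear_combination h0
      rw [h0, mul_zero, ha I hI]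
      simp
    · exact div_mul_cancel₀ _ h0
  -- the constant C
  have hsum_t : Summable (fun I : Fin n → ℕ => ‖a I‖ * (r/2) ^ (∑ j, I j)) := by
    have h1 := (hconv (fun _ => ((r/2 : ℝ) : ℂ)) (fun i => by
      rw [Complex.norm_real, Real.norm_eq_abs, abs_of_pos (by positivity)]
      linarith)).norm
    have h2 : (fun I : Fin n → ℕ => ‖a I * ∏ j, ((r/2 : ℝ) : ℂ) ^ I j‖)
        = fun I : Fin n → ℕ => ‖a I‖ * (r/2) ^ (∑ j, I j) := by
      funext I
      rw [norm_mul, norm_prod]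
      congr 1
      rw [← Finset.prod_pow_eq_pow_sum]
      refine Finset.prod_congr rfl fun j _ => ?_
      rw [norm_pow, Complex.norm_real, Real.norm_eq_abs, abs_of_pos (by positivity)]
    rw [← h2]
    exact h1
  set C : ℝ := ∑' I : Fin n → ℕ, ‖a I‖ * (r/2) ^ (∑ j, I j) with hCdef
  have hC0 : 0 ≤ C := tsum_nonneg fun I => by positivity
  have hCb : ∀ I : Fin n → ℕ, ‖a I‖ * (r/2) ^ (∑ j, I j) ≤ C :=
    fun I => Summable.le_tsum hsum_t I fun J _ => by positivity
  -- dominating sequence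
  have hu : Summable (fun I : Fin n → ℕ =>
      (C / (r/4)) * ∏ j, (((I j : ℝ) + 1) * (1/2) ^ I j)) :=
    (aux_summable_pi _ aux_g_summable (fun i => by positivity) n).mul_left _
  -- the derivative bound on the ball
  have hbound : ∀ (I : Fin n → ℕ) (y : Fin n → ℂ), y ∈ Metric.ball (0 : Fin n → ℂ) (r/4) →
      ‖auxD n (-a I / (1 + ∑ j, (lam j : ℂ) * (I j : ℂ))) I y‖
        ≤ (C / (r/4)) * ∏ j, (((I j : ℝ) + 1) * (1/2) ^ I j) := by
    intro I y hy
    have hy' : ∀ k, ‖y k‖ ≤ r/4 := fun k =>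
      le_of_lt (lt_of_le_of_lt (norm_le_pi_norm y k) (mem_ball_zero_iff.mp hy))
    refine (aux_D_norm_le n _ I (r/4) (by positivity) y hy').trans ?_
    have hprod_pos : (0:ℝ) ≤ ∏ j, (((I j : ℝ) + 1) * (1/2) ^ I j) :=
      Finset.prod_nonneg fun j _ => by positivity
    rcases Nat.eq_zero_or_pos (∑ j, I j) with hS | hS
    · have hz : (∑ j, (I j : ℝ)) = 0 := by
        have : ((∑ j, I j : ℕ) : ℝ) = 0 := by rw [hS]; simp
        push_cast at this
        exact this
      rw [hz, mul_zero, zero_mul]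
      positivity
    · obtain ⟨k', hk'⟩ : ∃ k', ∑ j, I j = k' + 1 := ⟨(∑ j, I j) - 1, by omega⟩
      have hbA : ‖-a I / (1 + ∑ j, (lam j : ℂ) * (I j : ℂ))‖ ≤ C / (r/2) ^ (∑ j, I j) := by
        refine (hb_le I).trans ?_
        rw [le_div_iff₀ (by positivity)]
        exact hCb I
      have hSP : (∑ j, (I j : ℝ)) ≤ ∏ j, ((I j : ℝ) + 1) := by
        have h := aux_sum_succ_le_prod n I
        have h2 : (∑ j, I j) ≤ ∏ j, (I j + 1) := le_trans (Nat.le_succ _) h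
        exact_mod_cast h2
      have hhalf : ∏ j, ((1:ℝ)/2) ^ I j = (1/2) ^ (∑ j, I j) :=
        Finset.prod_pow_eq_pow_sum _ _ _
      calc ‖-a I / (1 + ∑ j, (lam j : ℂ) * (I j : ℂ))‖ * (∑ j, (I j : ℝ))
            * (r/4) ^ ((∑ j, I j) - 1)
          ≤ (C / (r/2) ^ (∑ j, I j)) * (∑ j, (I j : ℝ)) * (r/4) ^ ((∑ j, I j) - 1) := by
            have hsn : (0:ℝ) ≤ ∑ j, (I j : ℝ) := Finset.sum_nonneg fun j _ => by positivity
            have hpn : (0:ℝ) ≤ (r/4) ^ ((∑ j, I j) - 1) := by positivity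
            exact mul_le_mul_of_nonneg_right (mul_le_mul_of_nonneg_right hbA hsn) hpn
        _ = (C / (r/4)) * ((∑ j, (I j : ℝ)) * (1/2) ^ (∑ j, I j)) := by
            rw [hk']
            have h12 : ((1:ℝ)/2) ^ (k' + 1) = (r/4) ^ (k' + 1) / (r/2) ^ (k' + 1) := by
              rw [← div_pow]
              congr 1
              field_simp
              ring
            rw [h12]
            have hr4 : (r/4 : ℝ) ≠ 0 := by positivity
            have hr2 : ((r/2 : ℝ)) ^ (k' + 1) ≠ 0 := by positivity
            simp only [Nat.add_sub_cancel]
            field_simp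
            ring
        _ ≤ (C / (r/4)) * ((∏ j, ((I j : ℝ) + 1)) * (1/2) ^ (∑ j, I j)) := by
            refine mul_le_mul_of_nonneg_left
              (mul_le_mul_of_nonneg_right hSP (by positivity)) (by positivity)
        _ = (C / (r/4)) * ∏ j, (((I j : ℝ) + 1) * (1/2) ^ I j) := by
            rw [Finset.prod_mul_distrib, hhalf]
  -- per-point conclusion
  intro x hx
  have hxr : ∀ i, ‖x i‖ < r := fun i => lt_of_lt_of_le (hx i) (by linarith)
  have hsum_ax := hconv x hxr
  have hsum_bx : Summable (fun I : Fin n → ℕ =>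
      (-a I / (1 + ∑ j, (lam j : ℂ) * (I j : ℂ))) * ∏ j, x j ^ I j) := by
    refine Summable.of_norm_bounded hsum_ax.norm ?_
    intro I
    rw [norm_mul, norm_mul]
    exact mul_le_mul_of_nonneg_right (hb_le I) (norm_nonneg _)
  refine ⟨hsum_bx, ?_⟩
  have hball : x ∈ Metric.ball (0 : Fin n → ℂ) (r/4) := by
    rw [mem_ball_zero_iff]
    exact (pi_norm_lt_iff (by positivity)).mpr hx
  have hf0 : Summable (fun I : Fin n → ℕ =>
      (-a I / (1 + ∑ j, (lam j : ℂ) * (I j : ℂ))) * ∏ j, (0 : Fin n → ℂ) j ^ I j) := by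
    apply summable_of_ne_finset_zero (s := {(fun _ => 0 : Fin n → ℕ)})
    intro I hI
    have hIne : ∃ j, I j ≠ 0 := by
      by_contra h
      push_neg at h
      apply hI
      rw [Finset.mem_singleton]
      funext j
      exact h j
    obtain ⟨j, hj⟩ := hIne
    have hz : ∏ j, (0 : Fin n → ℂ) j ^ I j = 0 :=
      Finset.prod_eq_zero (Finset.mem_univ j) (by simpa using zero_pow (M₀ := ℂ) hj)
    rw [hz, mul_zero]
  have hderiv : ∀ (I : Fin n → ℕ) (y : Fin n → ℂ), y ∈ Metric.ball (0 : Fin n → ℂ) (r/4) →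
      HasFDerivAt (fun y : Fin n → ℂ =>
          (-a I / (1 + ∑ j, (lam j : ℂ) * (I j : ℂ))) * ∏ j, y j ^ I j)
        (auxD n (-a I / (1 + ∑ j, (lam j : ℂ) * (I j : ℂ))) I y) y :=
    fun I y _ => aux_hasFDerivAt n _ I y
  have HF : HasFDerivAt (fun y : Fin n → ℂ => ∑' I : Fin n → ℕ,
        (-a I / (1 + ∑ j, (lam j : ℂ) * (I j : ℂ))) * ∏ j, y j ^ I j)
      (∑' I : Fin n → ℕ, auxD n (-a I / (1 + ∑ j, (lam j : ℂ) * (I j : ℂ))) I x) x :=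
    hasFDerivAt_tsum_of_isPreconnected hu Metric.isOpen_ball
      ((convex_ball _ _).isPreconnected) hderiv hbound
      (Metric.mem_ball_self (by positivity)) hf0 hball
  rw [HF.fderiv]
  have hDsum : Summable (fun I : Fin n → ℕ =>
      auxD n (-a I / (1 + ∑ j, (lam j : ℂ) * (I j : ℂ))) I x) :=
    Summable.of_norm_bounded hu (fun I => hbound I x hball)
  have hDsum' : ∀ i : Fin n, Summable (fun I : Fin n → ℕ =>
      auxD n (-a I / (1 + ∑ j, (lam j : ℂ) * (I j : ℂ))) I x (Pi.single i 1)) :=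
    fun i => hDsum.mapL (ContinuousLinearMap.apply ℂ ℂ (Pi.single i 1))
  have happ : ∀ i : Fin n,
      (∑' I : Fin n → ℕ, auxD n (-a I / (1 + ∑ j, (lam j : ℂ) * (I j : ℂ))) I x)
          (Pi.single i 1)
        = ∑' I : Fin n → ℕ,
            auxD n (-a I / (1 + ∑ j, (lam j : ℂ) * (I j : ℂ))) I x (Pi.single i 1) :=
    fun i => (ContinuousLinearMap.apply ℂ ℂ (Pi.single i 1)).map_tsum hDsum
  have hterm : ∀ i : Fin n, (lam i : ℂ) * x i *
        ((∑' I : Fin n → ℕ, auxD n (-a I / (1 + ∑ j, (lam j : ℂ) * (I j : ℂ))) I x)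
          (Pi.single i 1))
      = ∑' I : Fin n → ℕ, (lam i : ℂ) * x i *
          (auxD n (-a I / (1 + ∑ j, (lam j : ℂ) * (I j : ℂ))) I x (Pi.single i 1)) := by
    intro i
    rw [happ i, tsum_mul_left]
  rw [Finset.sum_congr rfl (fun i _ => hterm i)]
  have hswap : ∑ i : Fin n, ∑' I : Fin n → ℕ, (lam i : ℂ) * x i *
        (auxD n (-a I / (1 + ∑ j, (lam j : ℂ) * (I j : ℂ))) I x (Pi.single i 1))
      = ∑' I : Fin n → ℕ, ∑ i : Fin n, (lam i : ℂ) * x i *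
          (auxD n (-a I / (1 + ∑ j, (lam j : ℂ) * (I j : ℂ))) I x (Pi.single i 1)) :=
    (Summable.tsum_finsetSum (fun i _ => (hDsum' i).mul_left _)).symm
  rw [hswap]
  have hT1 : Summable (fun I : Fin n → ℕ => ∑ i : Fin n, (lam i : ℂ) * x i *
      (auxD n (-a I / (1 + ∑ j, (lam j : ℂ) * (I j : ℂ))) I x (Pi.single i 1))) :=
    summable_sum (fun i _ => (hDsum' i).mul_left _)
  rw [← Summable.tsum_add hT1 hsum_bx, ← Summable.tsum_add (hT1.add hsum_bx) hsum_ax]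
  have hzero : ∀ I : Fin n → ℕ,
      ((∑ i : Fin n, (lam i : ℂ) * x i *
          (auxD n (-a I / (1 + ∑ j, (lam j : ℂ) * (I j : ℂ))) I x (Pi.single i 1)))
        + (-a I / (1 + ∑ j, (lam j : ℂ) * (I j : ℂ))) * ∏ j, x j ^ I j)
        + a I * ∏ j, x j ^ I j = 0 := by
    intro I
    have hterm2 : ∀ i : Fin n, (lam i : ℂ) * x i *
          (auxD n (-a I / (1 + ∑ j, (lam j : ℂ) * (I j : ℂ))) I x (Pi.single i 1))
        = (lam i : ℂ) * (I i : ℂ) *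
            ((-a I / (1 + ∑ j, (lam j : ℂ) * (I j : ℂ))) * ∏ j, x j ^ I j) := by
      intro i
      rw [aux_D_apply]
      rcases Nat.eq_zero_or_pos (I i) with h | h
      · rw [h]
        simp
      · have hxp : x i * x i ^ (I i - 1) = x i ^ I i := by
          conv_rhs => rw [show I i = (I i - 1) + 1 from by omega]
          rw [pow_succ]
          ring
        have hprod : (∏ k ∈ Finset.univ.erase i, x k ^ I k) * x i ^ I i = ∏ j, x j ^ I j :=
          Finset.prod_erase_mul _ _ (Finset.mem_univ i)
        calc (lam i : ℂ) * x i *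
              ((-a I / (1 + ∑ j, (lam j : ℂ) * (I j : ℂ)))
                * (∏ k ∈ Finset.univ.erase i, x k ^ I k) * ((I i : ℂ) * x i ^ (I i - 1)))
            = (lam i : ℂ) * (I i : ℂ) *
                ((-a I / (1 + ∑ j, (lam j : ℂ) * (I j : ℂ)))
                  * ((∏ k ∈ Finset.univ.erase i, x k ^ I k) * (x i * x i ^ (I i - 1)))) := by
              ring
          _ = (lam i : ℂ) * (I i : ℂ) *
                ((-a I / (1 + ∑ j, (lam j : ℂ) * (I j : ℂ))) * ∏ j, x j ^ I j) := by
              rw [hxp, hprod]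
    rw [Finset.sum_congr rfl (fun i _ => hterm2 i), ← Finset.sum_mul]
    have hbm := hb_mul I
    have hcast2 : ∑ i : Fin n, (lam i : ℂ) * (I i : ℂ) = ∑ j, (lam j : ℂ) * (I j : ℂ) := rfl
    linear_combination (∏ j, x j ^ I j) * hbm
  exact (tsum_congr hzero).trans tsum_zero
end

section
/- Consider the differential equation z h'(z) + h(z) + (1/2) z h(z)² + r(z) = 0, where r is holomorphic at 0 with r(0) = 0. Then there exists a solution h holomorphic at 0. -/
open Finset FormalMultilinearSeries
open scoped NNReal ENNReal

/-- Coefficients of the Briot–Bouquet solution, defined by the recursion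
`(n+2) a_{n+1} = -(1/2) ∑_{i+j=n} a_i a_j - q_{n+1}`, `a_0 = 0`. -/
noncomputable def bbCoef (q : ℕ → ℂ) : ℕ → ℂ
  | 0 => 0
  | n + 1 =>
      (-(1/2) * (∑ i ∈ (Finset.range (n + 1)).attach,
          bbCoef q i * bbCoef q (n - (i : ℕ))) - q (n + 1)) / ((n : ℂ) + 2)
  termination_by n => n
  decreasing_by
  · exact Finset.mem_range.mp i.2
  · exact Nat.lt_succ_of_le (Nat.sub_le n i)

/-- Convolution coefficients. -/
noncomputable def bbC (q : ℕ → ℂ) (n : ℕ) : ℂ :=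
  if n = 0 then 0 else ∑ i ∈ Finset.range n, bbCoef q i * bbCoef q (n - 1 - i)

lemma bbCoef_succ (q : ℕ → ℂ) (n : ℕ) :
    bbCoef q (n + 1) =
      (-(1/2) * (∑ i ∈ Finset.range (n + 1), bbCoef q i * bbCoef q (n - i)) - q (n + 1)) /
        ((n : ℂ) + 2) := by
  rw [bbCoef, Finset.sum_attach (Finset.range (n + 1)) (fun j => bbCoef q j * bbCoef q (n - j))]

lemma bbC_succ (q : ℕ → ℂ) (n : ℕ) :
    bbC q (n + 1) = ∑ i ∈ Finset.range (n + 1), bbCoef q i * bbCoef q (n - i) := by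
  simp only [bbC, Nat.succ_ne_zero, if_false, Nat.succ_sub_one]

lemma bb_key (q : ℕ → ℂ) (hq0 : q 0 = 0) (n : ℕ) :
    ((n : ℂ) + 1) * bbCoef q n + (1/2) * bbC q n + q n = 0 := by
  cases n with
  | zero => simp [bbCoef, bbC, hq0]
  | succ n =>
      have hne : ((n : ℂ) + 2) ≠ 0 := by
        have : ((n : ℂ) + 2) = ((n + 2 : ℕ) : ℂ) := by push_cast; ring
        rw [this]
        exact Nat.cast_ne_zero.mpr (by omega)
      rw [bbCoef_succ, bbC_succ]
      push_cast
      field_simp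
      ring

lemma bb_bound (q : ℕ → ℂ) {C A : ℝ} (hC : 1 ≤ C) (hA : 0 ≤ A)
    (hq : ∀ n, ‖q n‖ ≤ C * A ^ n) :
    ∀ n, ‖bbCoef q n‖ ≤ (2 * C) * (max A (2 * C)) ^ n := by
  set M : ℝ := 2 * C with hM
  set B : ℝ := max A (2 * C) with hB
  have hCpos : 0 < C := lt_of_lt_of_le one_pos hC
  have hMpos : 0 < M := by positivity
  have hBge : 2 * C ≤ B := le_max_right _ _
  have hBgeA : A ≤ B := le_max_left _ _
  have hBpos : 0 < B := lt_of_lt_of_le (by positivity) hBge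
  intro n
  induction n using Nat.strong_induction_on with
  | _ n ih =>
    cases n with
    | zero => simp [bbCoef]; positivity
    | succ n =>
      have hBn : (0:ℝ) ≤ B ^ n := by positivity
      -- bound the convolution sum
      have hsum : ‖∑ i ∈ Finset.range (n + 1), bbCoef q i * bbCoef q (n - i)‖ ≤
          (n + 1) * (M * M * B ^ n) := by
        calc ‖∑ i ∈ Finset.range (n + 1), bbCoef q i * bbCoef q (n - i)‖
            ≤ ∑ i ∈ Finset.range (n + 1), ‖bbCoef q i * bbCoef q (n - i)‖ :=
              norm_sum_le _ _
          _ ≤ ∑ _i ∈ Finset.range (n + 1), (M * M * B ^ n) := by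
              apply Finset.sum_le_sum
              intro i hi
              have hi' : i ≤ n := Nat.lt_succ_iff.mp (Finset.mem_range.mp hi)
              have h1 : ‖bbCoef q i‖ ≤ M * B ^ i := ih i (Nat.lt_succ_of_le hi')
              have h2 : ‖bbCoef q (n - i)‖ ≤ M * B ^ (n - i) :=
                ih (n - i) (Nat.lt_succ_of_le (Nat.sub_le n i))
              have hpow : B ^ i * B ^ (n - i) = B ^ n := by
                rw [← pow_add, Nat.add_sub_cancel' hi']
              calc ‖bbCoef q i * bbCoef q (n - i)‖ = ‖bbCoef q i‖ * ‖bbCoef q (n - i)‖ :=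
                    norm_mul _ _
                _ ≤ (M * B ^ i) * (M * B ^ (n - i)) := by
                    apply mul_le_mul h1 h2 (norm_nonneg _) (by positivity)
                _ = M * M * B ^ n := by rw [← hpow]; ring
          _ = (n + 1) * (M * M * B ^ n) := by
              rw [Finset.sum_const, Finset.card_range, nsmul_eq_mul]; push_cast; ring
      have hqb : ‖q (n + 1)‖ ≤ C * B ^ (n + 1) := by
        calc ‖q (n + 1)‖ ≤ C * A ^ (n + 1) := hq (n + 1)
          _ ≤ C * B ^ (n + 1) := by
              apply mul_le_mul_of_nonneg_left (pow_le_pow_left₀ hA hBgeA _) hCpos.le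
      -- numerator bound
      have hnum : ‖-(1/2) * (∑ i ∈ Finset.range (n + 1), bbCoef q i * bbCoef q (n - i))
            - q (n + 1)‖ ≤ ((n:ℝ) + 2) * (M * B ^ (n + 1)) := by
        have step1 : ‖-(1/2) * (∑ i ∈ Finset.range (n + 1), bbCoef q i * bbCoef q (n - i))
              - q (n + 1)‖ ≤ (1/2) * ((n + 1) * (M * M * B ^ n)) + C * B ^ (n + 1) := by
          calc ‖-(1/2) * (∑ i ∈ Finset.range (n + 1), bbCoef q i * bbCoef q (n - i))
                - q (n + 1)‖
              ≤ ‖-(1/2) * (∑ i ∈ Finset.range (n + 1), bbCoef q i * bbCoef q (n - i))‖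
                  + ‖q (n + 1)‖ := norm_sub_le _ _
            _ ≤ (1/2) * ((n + 1) * (M * M * B ^ n)) + C * B ^ (n + 1) := by
                have : ‖-(1/2) * (∑ i ∈ Finset.range (n + 1), bbCoef q i * bbCoef q (n - i))‖
                    = (1/2) * ‖∑ i ∈ Finset.range (n + 1), bbCoef q i * bbCoef q (n - i)‖ := by
                  rw [norm_mul]; norm_num
                rw [this]
                exact add_le_add (by nlinarith [hsum]) hqb
        refine step1.trans ?_
        -- (1/2)(n+1) M² Bⁿ + C B^{n+1} ≤ (n+2)(M B^{n+1})
        have h1 : (1/2) * ((n + 1) * (M * M * B ^ n)) ≤ ((n:ℝ) + 1) * (M * B ^ (n + 1)) := by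
          have hMB : M * M * B ^ n ≤ 2 * (M * B ^ (n+1)) := by
            have key := mul_le_mul_of_nonneg_right hBge (mul_nonneg hMpos.le hBn)
            have hMM : M * M * B ^ n = 2 * C * (M * B ^ n) := by rw [hM]; ring
            rw [pow_succ]
            nlinarith [key, hMM, mul_nonneg (mul_nonneg hMpos.le hBn) hBpos.le]
          nlinarith [hMB, Nat.cast_nonneg (α := ℝ) n]
        have h2 : C * B ^ (n + 1) ≤ M * B ^ (n + 1) := by
          have : (0:ℝ) ≤ B ^ (n+1) := by positivity
          nlinarith
        nlinarith [h1, h2]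
      -- divide by n+2
      have hden : ‖((n : ℂ) + 2)‖ = (n : ℝ) + 2 := by
        have : ((n : ℂ) + 2) = ((n + 2 : ℕ) : ℂ) := by push_cast; ring
        rw [this, Complex.norm_natCast]; push_cast; ring
      rw [bbCoef_succ, norm_div, hden]
      rw [div_le_iff₀ (by positivity)]
      calc ‖-(1/2) * (∑ i ∈ Finset.range (n + 1), bbCoef q i * bbCoef q (n - i)) - q (n + 1)‖
          ≤ ((n:ℝ) + 2) * (M * B ^ (n + 1)) := hnum
        _ = M * B ^ (n + 1) * ((n:ℝ) + 2) := by ring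

set_option maxHeartbeats 1000000 in
/-- Briot–Bouquet: the equation `z h' + h + (1/2) z h² + r = 0`,
with `r` holomorphic at `0` and `r(0) = 0`, has a solution `h` holomorphic at `0`. -/
theorem stmt_16 (r : ℂ → ℂ) (hr : AnalyticAt ℂ r 0) (hr0 : r 0 = 0) :
    ∃ h : ℂ → ℂ, AnalyticAt ℂ h 0 ∧
      ∀ᶠ z in nhds (0 : ℂ),
        z * deriv h z + h z + z * (h z) ^ 2 / 2 + r z = 0 := by
  -- power series of r
  obtain ⟨pr, hpr⟩ := hr
  obtain ⟨Rr, hRr⟩ := hpr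
  set q : ℕ → ℂ := fun n => pr.coeff n with hqdef
  have hq0 : q 0 = 0 := by
    have h00 := hRr.coeff_zero (fun _ => (1 : ℂ))
    rw [hr0] at h00
    exact h00
  -- coefficient bound for q
  obtain ⟨r0, hr0pos, hr0lt⟩ : ∃ r0 : ℝ≥0, 0 < r0 ∧ (r0 : ℝ≥0∞) < pr.radius := by
    obtain ⟨r0, h1, h2⟩ := ENNReal.lt_iff_exists_nnreal_btwn.mp
      (lt_of_lt_of_le hRr.r_pos hRr.r_le)
    exact ⟨r0, by exact_mod_cast h1, h2⟩
  obtain ⟨C0, hC0pos, hC0⟩ := pr.norm_mul_pow_le_of_lt_radius hr0lt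
  set C : ℝ := max C0 1 with hCdef
  set A : ℝ := (r0 : ℝ)⁻¹ with hAdef
  have hC1 : 1 ≤ C := le_max_right _ _
  have hApos : 0 < A := by
    rw [hAdef]; exact inv_pos.mpr (by exact_mod_cast hr0pos)
  have hq : ∀ n, ‖q n‖ ≤ C * A ^ n := by
    intro n
    have h1 : ‖q n‖ ≤ ‖pr n‖ := by
      have hv := (pr n).le_opNorm (fun _ => (1 : ℂ))
      simp only [norm_one, Finset.prod_const_one, mul_one] at hv
      exact hv
    have h2 : ‖pr n‖ ≤ C0 / (r0 : ℝ) ^ n := by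
      rw [le_div_iff₀ (by positivity)]
      exact hC0 n
    calc ‖q n‖ ≤ C0 / (r0 : ℝ) ^ n := h1.trans h2
      _ = C0 * A ^ n := by rw [hAdef, div_eq_mul_inv, inv_pow]
      _ ≤ C * A ^ n := by
          apply mul_le_mul_of_nonneg_right (le_max_left _ _) (by positivity)
  -- coefficients of the solution
  set a : ℕ → ℂ := bbCoef q with hadef
  set M : ℝ := 2 * C with hMdef
  set B : ℝ := max A (2 * C) with hBdef
  have hBpos : 0 < B := lt_of_lt_of_le hApos (le_max_left _ _)
  have habd : ∀ n, ‖a n‖ ≤ M * B ^ n := bb_bound q hC1 hApos.le hq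
  set Bn : ℝ≥0 := ⟨B, hBpos.le⟩ with hBn
  -- the power series and its sum
  set p : FormalMultilinearSeries ℂ ℂ ℂ := FormalMultilinearSeries.ofScalars ℂ a with hpdef
  have hpnorm : ∀ n, ‖p n‖ = ‖a n‖ := fun n => FormalMultilinearSeries.ofScalars_norm ℂ a n
  have hradius : ((Bn⁻¹ : ℝ≥0) : ℝ≥0∞) ≤ p.radius := by
    apply p.le_radius_of_bound M
    intro n
    have : ((Bn⁻¹ : ℝ≥0) : ℝ) = B⁻¹ := by rw [NNReal.coe_inv]; rfl
    rw [hpnorm, this]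
    calc ‖a n‖ * B⁻¹ ^ n ≤ (M * B ^ n) * B⁻¹ ^ n := by
          apply mul_le_mul_of_nonneg_right (habd n) (by positivity)
      _ = M := by rw [mul_assoc, ← mul_pow, mul_inv_cancel₀ hBpos.ne', one_pow, mul_one]
  have hBnpos : 0 < Bn := by rw [← NNReal.coe_pos]; exact hBpos
  have hiBpos : (0 : ℝ≥0∞) < ((Bn⁻¹ : ℝ≥0) : ℝ≥0∞) := ENNReal.coe_pos.mpr (inv_pos.mpr hBnpos)
  have hradiuspos : 0 < p.radius := lt_of_lt_of_le hiBpos hradius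
  set h : ℂ → ℂ := p.sum with hhdef
  have hball : HasFPowerSeriesOnBall h p 0 p.radius := p.hasFPowerSeriesOnBall hradiuspos
  have hanal : AnalyticAt ℂ h 0 := hball.analyticAt
  have hdball : HasFPowerSeriesOnBall (fderiv ℂ h) p.derivSeries 0 p.radius := hball.fderiv
  refine ⟨h, hanal, ?_⟩
  -- the neighborhood
  set ρ : ℝ≥0∞ := min Rr ((Bn⁻¹ : ℝ≥0) : ℝ≥0∞) with hρ
  have hρpos : 0 < ρ := lt_min hRr.r_pos hiBpos
  filter_upwards [EMetric.ball_mem_nhds (0 : ℂ) hρpos] with z hz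
  have hzr : z ∈ EMetric.ball (0 : ℂ) Rr := EMetric.ball_subset_ball (min_le_left _ _) hz
  have hzB : z ∈ EMetric.ball (0 : ℂ) ((Bn⁻¹ : ℝ≥0) : ℝ≥0∞) :=
    EMetric.ball_subset_ball (min_le_right _ _) hz
  have hzp : z ∈ EMetric.ball (0 : ℂ) p.radius := EMetric.ball_subset_ball hradius hzB
  have hznorm : ‖z‖ * B < 1 := by
    have h1 : ‖z‖₊ < Bn⁻¹ := by
      have h0 : ‖z‖ₑ < ((Bn⁻¹ : ℝ≥0) : ℝ≥0∞) := by
        simpa [edist_zero_right] using Metric.mem_eball.mp hzB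
      exact ENNReal.coe_lt_coe.mp h0
    have h2 : ‖z‖₊ * Bn < 1 := by
      rw [← lt_div_iff₀ hBnpos, div_eq_mul_inv, one_mul]
      exact h1
    calc ‖z‖ * B = ((‖z‖₊ * Bn : ℝ≥0) : ℝ) := by rw [NNReal.coe_mul, coe_nnnorm]; rfl
      _ < 1 := by exact_mod_cast h2
  have hzn : 0 ≤ ‖z‖ := norm_nonneg z
  -- Series 2 : h z
  have T2 : HasSum (fun n => a n * z ^ n) (h z) := by
    have hs := hball.hasSum (y := z) (by simpa [edist_zero_right] using Metric.mem_eball.mp hzp)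
    simp only [zero_add] at hs
    have he : (fun n => (p n) fun _ => z) = fun n => a n * z ^ n := by
      funext n
      rw [hpdef, FormalMultilinearSeries.ofScalars_apply_eq, smul_eq_mul, mul_comm]
    rwa [he] at hs
  -- Series 1 : z * deriv h z
  have T1 : HasSum (fun n : ℕ => (n : ℂ) * a n * z ^ n) (z * deriv h z) := by
    have hS := hdball.hasSum (y := z) (by simpa [edist_zero_right] using Metric.mem_eball.mp hzp)
    simp only [zero_add] at hS
    have hS2 := hS.mapL (ContinuousLinearMap.apply ℂ ℂ z)
    have hterm : ∀ n, (ContinuousLinearMap.apply ℂ ℂ z) (p.derivSeries n fun _ => z)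
        = ((n : ℂ) + 1) * a (n + 1) * z ^ (n + 1) := by
      intro n
      have := p.derivSeries_apply_diag n z
      simp only [ContinuousLinearMap.apply_apply]
      rw [this, hpdef, FormalMultilinearSeries.ofScalars_apply_eq, nsmul_eq_mul, smul_eq_mul]
      push_cast
      ring
    have hval : (ContinuousLinearMap.apply ℂ ℂ z) (fderiv ℂ h z) = z * deriv h z := by
      simp only [ContinuousLinearMap.apply_apply]
      rw [← fderiv_apply_one_eq_deriv]
      have : z = z • (1 : ℂ) := by simp
      conv_lhs => rw [this, ContinuousLinearMap.map_smul]
      simp [smul_eq_mul]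
    rw [hval] at hS2
    have hS3 : HasSum (fun n : ℕ => ((n : ℂ) + 1) * a (n + 1) * z ^ (n + 1)) (z * deriv h z) := by
      rwa [show (fun n => (ContinuousLinearMap.apply ℂ ℂ z) ((p.derivSeries n) fun _ => z))
        = fun n : ℕ => ((n : ℂ) + 1) * a (n + 1) * z ^ (n + 1) from funext hterm] at hS2
    have hS4 : HasSum (fun n : ℕ => (((n + 1 : ℕ) : ℂ)) * a (n + 1) * z ^ (n + 1))
        (z * deriv h z) := by
      have he : (fun n : ℕ => (((n + 1 : ℕ) : ℂ)) * a (n + 1) * z ^ (n + 1))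
          = fun n : ℕ => ((n : ℂ) + 1) * a (n + 1) * z ^ (n + 1) := by
        funext n; push_cast; ring
      rw [he]; exact hS3
    apply (hasSum_nat_add_iff' (f := fun n : ℕ => (n : ℂ) * a n * z ^ n) 1).mp
    simp only [Finset.range_one, Finset.sum_singleton, Nat.cast_zero, zero_mul, sub_zero]
    exact hS4
  -- Series 4 : r z
  have T4 : HasSum (fun n => q n * z ^ n) (r z) := by
    have hs := hRr.hasSum (y := z) (by simpa [edist_zero_right] using Metric.mem_eball.mp hzr)
    simp only [zero_add] at hs
    have he : (fun n => (pr n) fun _ => z) = fun n => q n * z ^ n := by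
      funext n
      rw [pr.apply_eq_pow_smul_coeff, smul_eq_mul, mul_comm]
    rwa [he] at hs
  -- Series 3 : z * (h z)^2 / 2, via Cauchy product
  have hfn : Summable (fun n => ‖a n * z ^ n‖) := by
    refine Summable.of_nonneg_of_le (fun n => norm_nonneg _) (fun n => ?_)
      ((summable_geometric_of_lt_one (by positivity) hznorm).mul_left M)
    calc ‖a n * z ^ n‖ = ‖a n‖ * ‖z‖ ^ n := by rw [norm_mul, norm_pow]
      _ ≤ (M * B ^ n) * ‖z‖ ^ n := by
          apply mul_le_mul_of_nonneg_right (habd n) (by positivity)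
      _ = M * (‖z‖ * B) ^ n := by rw [mul_pow]; ring
  have hsq : HasSum (fun n => ∑ kl ∈ Finset.HasAntidiagonal.antidiagonal n,
      (a kl.1 * z ^ kl.1) * (a kl.2 * z ^ kl.2)) (h z * h z) := by
    have hsummable : Summable (fun n => ∑ kl ∈ Finset.HasAntidiagonal.antidiagonal n,
        (a kl.1 * z ^ kl.1) * (a kl.2 * z ^ kl.2)) :=
      (summable_norm_sum_mul_antidiagonal_of_summable_norm hfn hfn).of_norm
    rw [Summable.hasSum_iff hsummable]
    rw [← tsum_mul_tsum_eq_tsum_sum_antidiagonal_of_summable_norm hfn hfn]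
    rw [T2.tsum_eq]
  have hsq2 : HasSum (fun n => bbC q (n + 1) * z ^ n) (h z * h z) := by
    have he : (fun n => ∑ kl ∈ Finset.HasAntidiagonal.antidiagonal n, (a kl.1 * z ^ kl.1) * (a kl.2 * z ^ kl.2))
        = fun n => bbC q (n + 1) * z ^ n := by
      funext n
      rw [bbC_succ, Finset.Nat.sum_antidiagonal_eq_sum_range_succ_mk, Finset.sum_mul]
      apply Finset.sum_congr rfl
      intro i hi
      have hi' : i ≤ n := Nat.lt_succ_iff.mp (Finset.mem_range.mp hi)
      have hzz : z ^ i * z ^ (n - i) = z ^ n := by rw [← pow_add, Nat.add_sub_cancel' hi']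
      show (a i * z ^ i) * (a (n - i) * z ^ (n - i)) = bbCoef q i * bbCoef q (n - i) * z ^ n
      rw [hadef, ← hzz]
      ring
    rwa [he] at hsq
  have T3' : HasSum (fun n => (1/2 : ℂ) * bbC q (n + 1) * z ^ (n + 1))
      (z * (h z) ^ 2 / 2) := by
    have hm := hsq2.mul_left (z / 2)
    have he : (fun n => z / 2 * (bbC q (n + 1) * z ^ n))
        = fun n => (1/2 : ℂ) * bbC q (n + 1) * z ^ (n + 1) := by
      funext n; ring
    rw [he] at hm
    have hv : z / 2 * (h z * h z) = z * (h z) ^ 2 / 2 := by ring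
    rwa [hv] at hm
  have T3 : HasSum (fun n => (1/2 : ℂ) * bbC q n * z ^ n) (z * (h z) ^ 2 / 2) := by
    apply (hasSum_nat_add_iff' (f := fun n => (1/2 : ℂ) * bbC q n * z ^ n) 1).mp
    have hc0 : bbC q 0 = 0 := by simp [bbC]
    simp only [Finset.range_one, Finset.sum_singleton, hc0, mul_zero, zero_mul, sub_zero]
    exact T3'
  -- combine
  have Htot : HasSum
      (fun n : ℕ => (n : ℂ) * a n * z ^ n + a n * z ^ n + (1/2 : ℂ) * bbC q n * z ^ n
        + q n * z ^ n)
      (z * deriv h z + h z + z * (h z) ^ 2 / 2 + r z) := ((T1.add T2).add T3).add T4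
  have hzero : (fun n : ℕ => (n : ℂ) * a n * z ^ n + a n * z ^ n + (1/2 : ℂ) * bbC q n * z ^ n
      + q n * z ^ n) = fun _ => (0 : ℂ) := by
    funext n
    have hkey := bb_key q hq0 n
    calc (n : ℂ) * a n * z ^ n + a n * z ^ n + (1/2 : ℂ) * bbC q n * z ^ n + q n * z ^ n
        = (((n : ℂ) + 1) * bbCoef q n + (1/2) * bbC q n + q n) * z ^ n := by rw [hadef]; ring
      _ = 0 := by rw [hkey, zero_mul]
  rw [hzero] at Htot
  exact Htot.unique hasSum_zero
end

section
/- Let Y = Σ_{i=1}^n λᵢ zᵢ ∂/∂zᵢ with λᵢ ∈ ℤ, p₁,…,p_k ∈ ℤ with Σ_{i=1}^k λᵢpᵢ = −1, and u a non-vanishing holomorphic function near 0 ∈ ℂⁿ with Yu ≡ 0. Define wᵢ = u^{−λᵢ} zᵢ for i ≤ k and wᵢ = zᵢ for i > k. Then the vector field Z = u · z₁^{p₁}⋯z_k^{p_k} · Y satisfies Z wᵢ = λᵢ (w₁^{p₁}⋯w_k^{p_k}) wᵢ for all i, i.e. in the coordinates w, Z = w₁^{p₁}⋯w_k^{p_k}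 Σ λᵢ wᵢ ∂/∂wᵢ. -/
lemma zpow_sum_aux {a : ℂ} (ha : a ≠ 0)
    {ι : Type*} (s : Finset ι) (f : ι → ℤ) :
    a ^ (∑ i ∈ s, f i) = ∏ i ∈ s, a ^ f i := by
  classical
  induction s using Finset.induction with
  | empty => simp
  | @insert a s hx ih => rw [Finset.sum_insert hx, Finset.prod_insert hx, zpow_add₀ ha, ih]

/-- let `Y = Σ λᵢzᵢ∂/∂zᵢ` with `λᵢ ∈ ℤ`, `p₁,…,p_k ∈ ℤ` with
`Σ_{i≤k} λᵢpᵢ = −1`, and `u` a non-vanishing holomorphic function near `0` with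
`Yu ≡ 0`. Set `wᵢ = u^{−λᵢ} zᵢ` for `i ≤ k` and `wᵢ = zᵢ` for `i > k`. Then
`Z = u·z₁^{p₁}⋯z_k^{p_k}·Y` satisfies `Z wᵢ = λᵢ (w₁^{p₁}⋯w_k^{p_k}) wᵢ`, i.e.
in the coordinates `w`, `Z = w₁^{p₁}⋯w_k^{p_k} Σ λᵢwᵢ∂/∂wᵢ`. (`Z wᵢ` is the
directional derivative of the function `wᵢ` along the vector field `Z`.) -/
theorem stmt_19 (n k : ℕ) (hk : k ≤ n)
    (lam p : Fin n → ℤ)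
    (hsum : ∑ i ∈ Finset.univ.filter (fun i : Fin n => (i : ℕ) < k), lam i * p i = -1)
    (U : Set (Fin n → ℂ)) (hU : IsOpen U) (hU0 : (0 : Fin n → ℂ) ∈ U)
    (u : (Fin n → ℂ) → ℂ) (hu : DifferentiableOn ℂ u U)
    (huz : ∀ z ∈ U, u z ≠ 0)
    (hYu : ∀ z ∈ U, fderiv ℂ u z (fun i => (lam i : ℂ) * z i) = 0) :
    ∀ z ∈ U, ∀ i : Fin n,
      fderiv ℂ (fun y => (if (i : ℕ) < k then u y ^ (-(lam i)) else 1) * y i) z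
          (fun j => (u z * ∏ l ∈ Finset.univ.filter (fun l : Fin n => (l : ℕ) < k),
              z l ^ p l) * ((lam j : ℂ) * z j))
        = (lam i : ℂ)
          * (∏ l ∈ Finset.univ.filter (fun l : Fin n => (l : ℕ) < k),
              (u z ^ (-(lam l)) * z l) ^ p l)
          * ((if (i : ℕ) < k then u z ^ (-(lam i)) else 1) * z i) := by
  intro z hz i
  have huzz : u z ≠ 0 := huz z hz
  set s := Finset.univ.filter (fun l : Fin n => (l : ℕ) < k) with hs
  set c : ℂ := u z * ∏ l ∈ s, z l ^ p l with hc
  -- product identity: ∏ (u z ^ (-lam l) * z l) ^ p l = c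
  have hprod : (∏ l ∈ s, (u z ^ (-(lam l)) * z l) ^ p l) = c := by
    have h1 : ∀ l ∈ s, (u z ^ (-(lam l)) * z l) ^ p l
        = u z ^ (-(lam l * p l)) * z l ^ p l := by
      intro l _
      rw [mul_zpow, ← zpow_mul, neg_mul]
    rw [Finset.prod_congr rfl h1, Finset.prod_mul_distrib,
      ← zpow_sum_aux huzz, Finset.sum_neg_distrib, hsum]
    simp [hc]
  -- the direction vector is c • (fun j => lam j * z j)
  have hdir : (fun j => c * ((lam j : ℂ) * z j)) = c • (fun j => (lam j : ℂ) * z j) := rfl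
  rw [hdir, ContinuousLinearMap.map_smul, hprod]
  by_cases hik : (i : ℕ) < k
  · simp only [hik, if_true]
    -- function is fun y => u y ^ (-(lam i)) * y i
    have hud : HasFDerivAt u (fderiv ℂ u z) z :=
      (hu.differentiableAt (hU.mem_nhds hz)).hasFDerivAt
    have hz1 : HasFDerivAt (fun y : Fin n → ℂ => u y ^ (-(lam i)))
        (((-(lam i) : ℤ) * u z ^ (-(lam i) - 1)) • fderiv ℂ u z) z := by
      have := (hasDerivAt_zpow (-(lam i)) (u z) (Or.inl huzz)).comp_hasFDerivAt z hud
      simpa [Function.comp_def] using this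
    have hproj : HasFDerivAt (fun y : Fin n → ℂ => y i)
        (ContinuousLinearMap.proj (R := ℂ) (φ := fun _ : Fin n => ℂ) i) z :=
      (ContinuousLinearMap.proj (R := ℂ) (φ := fun _ : Fin n => ℂ) i).hasFDerivAt
    have hmul := hz1.mul hproj
    rw [show (fun y : Fin n → ℂ => u y ^ (-(lam i)) * y i) = ((fun y => u y ^ (-(lam i))) * fun y => y i) from rfl, hmul.fderiv]
    simp only [ContinuousLinearMap.add_apply, ContinuousLinearMap.smul_apply,
      ContinuousLinearMap.proj_apply, smul_eq_mul]
    rw [hYu z hz]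
    ring
  · simp only [hik, if_false, one_mul]
    have hproj : HasFDerivAt (fun y : Fin n → ℂ => y i)
        (ContinuousLinearMap.proj (R := ℂ) (φ := fun _ : Fin n => ℂ) i) z :=
      (ContinuousLinearMap.proj (R := ℂ) (φ := fun _ : Fin n => ℂ) i).hasFDerivAt
    rw [hproj.fderiv]
    simp only [ContinuousLinearMap.proj_apply, smul_eq_mul]
    ring
end
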